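/- arXiv:0805.1430 — 8 statements merged into one kernel-verified Lean document; each statement's English description precedes it below -/
import Mathlib

section
/- If v₁, v₂ are nonzero vectors in a real inner product space H and u ∈ H is nonzero, then |sin(v₁,v₂)| ≤ |sin(v₁,u)| + |sin(u,v₂)|, where |sin(x,y)| denotes the sine of the angle between nonzero vectors x and y, i.e. |sin(x,y)| = sqrt(1 − (⟨x,y⟩/(‖x‖·‖y‖))²). -/
open scoped RealInnerProductSpace

/-- The absolute value of the sine of the angle between two nonzero vectors. -/
noncomputable def absSin {H : Type*} [NormedAddCommGroup H] [InnerProductSpace ℝ H]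
    (x y : H) : ℝ :=
  Real.sqrt (1 - (⟪x, y⟫ / (‖x‖ * ‖y‖)) ^ 2)

section Aux

variable {H : Type*} [NormedAddCommGroup H] [InnerProductSpace ℝ H]

lemma absSin_comm (x y : H) : absSin x y = absSin y x := by
  simp [absSin, real_inner_comm x y, mul_comm ‖x‖ ‖y‖]

lemma absSin_le_one (x y : H) : absSin x y ≤ 1 := by
  unfold absSin
  have h1 : 1 - (⟪x, y⟫ / (‖x‖ * ‖y‖)) ^ 2 ≤ 1 := by
    nlinarith [sq_nonneg (⟪x, y⟫ / (‖x‖ * ‖y‖))]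
  calc Real.sqrt (1 - (⟪x, y⟫ / (‖x‖ * ‖y‖)) ^ 2) ≤ Real.sqrt 1 :=
        Real.sqrt_le_sqrt h1
    _ = 1 := Real.sqrt_one

lemma absSin_nonneg (x y : H) : 0 ≤ absSin x y := Real.sqrt_nonneg _

lemma absSin_smul (a b : ℝ) (ha : a ≠ 0) (hb : b ≠ 0) (x y : H) :
    absSin (a • x) (b • y) = absSin x y := by
  unfold absSin
  congr 1
  rw [real_inner_smul_left, real_inner_smul_right, norm_smul, norm_smul]
  rcases eq_or_ne ‖x‖ 0 with h | h
  · simp [h]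
  rcases eq_or_ne ‖y‖ 0 with h' | h'
  · simp [h']
  have : a * (b * ⟪x, y⟫) / (‖a‖ * ‖x‖ * (‖b‖ * ‖y‖))
      = (a / ‖a‖) * (b / ‖b‖) * (⟪x, y⟫ / (‖x‖ * ‖y‖)) := by
    field_simp
  rw [this, mul_pow, mul_pow]
  have h1 : (a / ‖a‖) ^ 2 = 1 := by
    rw [div_pow, Real.norm_eq_abs, sq_abs, div_self (pow_ne_zero 2 ha)]
  have h2 : (b / ‖b‖) ^ 2 = 1 := by
    rw [div_pow, Real.norm_eq_abs, sq_abs, div_self (pow_ne_zero 2 hb)]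
  rw [h1, h2, one_mul, one_mul]

lemma norm_sub_smul_sq {x y : H} (hx : ‖x‖ = 1) (hy : ‖y‖ = 1) (c : ℝ) :
    ‖x - c • y‖ ^ 2 = (c - ⟪x, y⟫) ^ 2 + (1 - ⟪x, y⟫ ^ 2) := by
  have h := norm_sub_sq_real x (c • y)
  rw [real_inner_smul_right, norm_smul, mul_pow] at h
  rw [h, hx, hy, Real.norm_eq_abs, sq_abs]
  ring

lemma absSin_le_norm_sub {x y : H} (hx : ‖x‖ = 1) (hy : ‖y‖ = 1) (c : ℝ) :
    absSin x y ≤ ‖x - c • y‖ := by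
  have h1 : absSin x y = Real.sqrt (1 - ⟪x, y⟫ ^ 2) := by
    simp [absSin, hx, hy]
  rw [h1, ← Real.sqrt_sq (norm_nonneg (x - c • y))]
  apply Real.sqrt_le_sqrt
  rw [norm_sub_smul_sq hx hy]
  nlinarith [sq_nonneg (c - ⟪x, y⟫)]

lemma absSin_eq_norm {x y : H} (hx : ‖x‖ = 1) (hy : ‖y‖ = 1) :
    absSin x y = ‖x - ⟪x, y⟫ • y‖ := by
  have h1 : absSin x y = Real.sqrt (1 - ⟪x, y⟫ ^ 2) := by
    simp [absSin, hx, hy]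
  rw [h1, ← Real.sqrt_sq (norm_nonneg (x - ⟪x, y⟫ • y)), norm_sub_smul_sq hx hy]
  ring_nf

lemma key_unit {x z u : H} (hx : ‖x‖ = 1) (hz : ‖z‖ = 1) (hu : ‖u‖ = 1)
    (hle : |⟪x, u⟫| ≤ |⟪z, u⟫|) :
    absSin x z ≤ absSin x u + absSin u z := by
  rcases eq_or_ne ⟪z, u⟫ 0 with h0 | h0
  · have h0' : ⟪u, z⟫ = 0 := by rw [real_inner_comm]; exact h0
    have huz : absSin u z = 1 := by
      unfold absSin
      rw [h0']
      norm_num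
    calc absSin x z ≤ 1 := absSin_le_one x z
      _ ≤ absSin x u + absSin u z := by
        rw [huz]; linarith [absSin_nonneg x u]
  · set c : ℝ := ⟪x, u⟫ / ⟪z, u⟫ with hc
    have hcle : |c| ≤ 1 := by
      rw [hc, abs_div]
      exact div_le_one_of_le₀ hle (abs_nonneg _)
    have hkey : x - c • z = (x - ⟪x, u⟫ • u) - c • (z - ⟪z, u⟫ • u) := by
      have : c * ⟪z, u⟫ = ⟪x, u⟫ := div_mul_cancel₀ _ h0
      rw [smul_sub, smul_smul, this]
      abel
    calc absSin x z ≤ ‖x - c • z‖ := absSin_le_norm_sub hx hz c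
      _ = ‖(x - ⟪x, u⟫ • u) - c • (z - ⟪z, u⟫ • u)‖ := by rw [hkey]
      _ ≤ ‖x - ⟪x, u⟫ • u‖ + ‖c • (z - ⟪z, u⟫ • u)‖ := norm_sub_le _ _
      _ ≤ ‖x - ⟪x, u⟫ • u‖ + ‖z - ⟪z, u⟫ • u‖ := by
          have := norm_smul c (z - ⟪z, u⟫ • u)
          have h1 : ‖c • (z - ⟪z, u⟫ • u)‖ ≤ ‖z - ⟪z, u⟫ • u‖ := by
            rw [this, Real.norm_eq_abs]
            nlinarith [norm_nonneg (z - ⟪z, u⟫ • u), abs_nonneg c]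
          linarith
      _ = absSin x u + absSin u z := by
          rw [← absSin_eq_norm hx hu, ← absSin_eq_norm hz hu, absSin_comm z u]

lemma sin_triangle_unit {x z u : H} (hx : ‖x‖ = 1) (hz : ‖z‖ = 1) (hu : ‖u‖ = 1) :
    absSin x z ≤ absSin x u + absSin u z := by
  rcases le_total |⟪x, u⟫| |⟪z, u⟫| with h | h
  · exact key_unit hx hz hu h
  · have := key_unit hz hx hu h
    rw [absSin_comm x z, absSin_comm x u, absSin_comm u z]
    linarith [this, absSin_comm z u ▸ this]

end Aux

theorem sin_triangle_inequality {H : Type*} [NormedAddCommGroup H] [InnerProductSpace ℝ H]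
    (v₁ v₂ u : H) (h₁ : v₁ ≠ 0) (h₂ : v₂ ≠ 0) (hu : u ≠ 0) :
    absSin v₁ v₂ ≤ absSin v₁ u + absSin u v₂ := by
  have n₁ : ‖v₁‖ ≠ 0 := norm_ne_zero_iff.mpr h₁
  have n₂ : ‖v₂‖ ≠ 0 := norm_ne_zero_iff.mpr h₂
  have nu : ‖u‖ ≠ 0 := norm_ne_zero_iff.mpr hu
  have i₁ : (‖v₁‖⁻¹ : ℝ) ≠ 0 := inv_ne_zero n₁
  have i₂ : (‖v₂‖⁻¹ : ℝ) ≠ 0 := inv_ne_zero n₂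
  have iu : (‖u‖⁻¹ : ℝ) ≠ 0 := inv_ne_zero nu
  have u₁ : ‖(‖v₁‖⁻¹ • v₁ : H)‖ = 1 := by
    rw [norm_smul, Real.norm_eq_abs, abs_inv, abs_norm, inv_mul_cancel₀ n₁]
  have u₂ : ‖(‖v₂‖⁻¹ • v₂ : H)‖ = 1 := by
    rw [norm_smul, Real.norm_eq_abs, abs_inv, abs_norm, inv_mul_cancel₀ n₂]
  have uu : ‖(‖u‖⁻¹ • u : H)‖ = 1 := by
    rw [norm_smul, Real.norm_eq_abs, abs_inv, abs_norm, inv_mul_cancel₀ nu]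
  have h := sin_triangle_unit u₁ u₂ uu
  rwa [absSin_smul _ _ i₁ i₂, absSin_smul _ _ i₁ iu, absSin_smul _ _ iu i₂] at h
end

section
/- If f : ℝ → ℝ is Lebesgue measurable, not identically zero, and satisfies f(α+β) = (f(α+δ)/f(δ))·f(β) + (f(δ−β)/f(δ))·f(α) for all α, β ∈ ℝ and all δ with f(δ) ≠ 0, then f is an odd function: f(−x) = −f(x) for all x ∈ ℝ. -/
theorem funcEq_odd (f : ℝ → ℝ) (hf : Measurable f)
    (hne : ∃ x, f x ≠ 0)
    (heq : ∀ α β δ : ℝ, f δ ≠ 0 →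
      f (α + β) = (f (α + δ) / f δ) * f β + (f (δ - β) / f δ) * f α) :
    ∀ x : ℝ, f (-x) = -f x := by
  obtain ⟨δ0, hδ0⟩ := hne
  have h0 : f 0 = 0 := by
    have h := heq 0 0 δ0 hδ0
    simp only [zero_add, add_zero, sub_zero, div_self hδ0, one_mul] at h
    linarith [h]
  intro x
  by_cases hx : ∃ δ, f δ ≠ 0 ∧ f (x + δ) ≠ 0
  · obtain ⟨δ, hδ, hxδ⟩ := hx
    have h := heq x (-x) δ hδ
    rw [add_neg_cancel, h0, sub_neg_eq_add, add_comm δ x] at h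
    have h2 : f (x + δ) * (f (-x) + f x) = 0 := by
      field_simp at h
      linarith
    rcases mul_eq_zero.mp h2 with h3 | h3
    · exact absurd h3 hxδ
    · linarith
  · push_neg at hx
    have hx' : ∀ δ, f δ ≠ 0 → f (x + δ) = 0 := hx
    have hfx : f x ≠ 0 := by
      intro hfx0
      apply hδ0
      have h := heq x (δ0 - x) δ0 hδ0
      rw [hx' δ0 hδ0, hfx0] at h
      simpa using h
    have h2x : f (x + x) = 0 := hx' x hfx
    have sym : ∀ t, f (x + t) = f (x - t) := by
      intro t
      have h := heq x t x hfx
      rw [h2x, div_mul_cancel₀ _ hfx] at h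
      simpa using h
    have hk : ∀ y, f (-y) = f (-x) / f x * f y := by
      intro y
      have h := heq y (x + x) x hfx
      rw [show x - (x + x) = -x by ring, h2x, mul_zero, zero_add] at h
      have h3 : f (-y) = f (y + (x + x)) := by
        have hs := sym (x + y)
        rw [show x - (x + y) = -y by ring, show x + (x + y) = y + (x + x) by ring] at hs
        exact hs.symm
      rw [h3, h]
    have hk2 : f (-x) / f x = 1 ∨ f (-x) / f x = -1 := by
      have h1 := hk (-x)
      rw [neg_neg, hk x] at h1
      have : (f (-x) / f x) * (f (-x) / f x) = 1 := by
        field_simp at h1 ⊢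
        nlinarith [h1]
      exact mul_self_eq_one_iff.mp this
    rcases hk2 with hk2 | hk2
    · -- even case: contradiction
      exfalso
      have heven : ∀ y, f (-y) = f y := by
        intro y; rw [hk y, hk2, one_mul]
      have h2δ : ∀ δ, f δ ≠ 0 → f (δ + δ) = 0 := by
        intro δ hδ
        have h := heq δ (-δ) δ hδ
        rw [add_neg_cancel, h0, sub_neg_eq_add, heven δ] at h
        field_simp at h
        have : δ * (1 + 1) = δ + δ := by ring
        rw [this] at h
        linarith
      have symδ : ∀ δ, f δ ≠ 0 → ∀ t, f (δ + t) = f (δ - t) := by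
        intro δ hδ t
        have h := heq δ t δ hδ
        rw [h2δ δ hδ, div_mul_cancel₀ _ hδ] at h
        simpa using h
      have pyth : ∀ δ, f δ ≠ 0 → ∀ z, f δ * f δ = f (δ - z) * f (δ - z) + f z * f z := by
        intro δ hδ z
        have h := heq z (δ - z) δ hδ
        rw [show z + (δ - z) = δ by ring, show δ - (δ - z) = z by ring,
          add_comm z δ, symδ δ hδ z] at h
        field_simp at h
        linarith
      have hhalf : f (δ0 / 2) ≠ 0 := by
        intro h
        have hp := pyth δ0 hδ0 (δ0 / 2)
        rw [show δ0 - δ0 / 2 = δ0 / 2 by ring, h] at hp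
        simp at hp
        exact hδ0 (by nlinarith [hp])
      have hp := pyth (δ0 / 2) hhalf δ0
      rw [show δ0 / 2 - δ0 = -(δ0 / 2) by ring, heven (δ0 / 2)] at hp
      exact hδ0 (by nlinarith [hp])
    · rw [hk x, hk2]; ring
end

section
/- Every Lebesgue measurable function f : ℝ → ℝ satisfying f(α+β) = (f(α+δ)/f(δ))·f(β) + (f(δ−β)/f(δ))·f(α) for all α, β ∈ ℝ and all δ with f(δ) ≠ 0, is of the form f(x) = c·s_k(x) for some constants c, k ∈ ℝ, where s_k(x) = sin(√k·x)/√k for k > 0, s_0(x) = x, and s_k(x) = sinh(√(−k)·x)/√(−k) for k < 0. Conversely every such function satisfies the equation. -/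
open MeasureTheory intervalIntegral Set

/-- The generalized sine function on a space of constant curvature `k`. -/
noncomputable def genSin (k : ℝ) : ℝ → ℝ :=
  if 0 < k then fun x => Real.sin (Real.sqrt k * x) / Real.sqrt k
  else if k = 0 then fun x => x
  else fun x => Real.sinh (Real.sqrt (-k) * x) / Real.sqrt (-k)

lemma circleHom (E : ℝ → ℂ) (hmeas : Measurable E) (habs : ∀ x, ‖E x‖ = 1)
    (hmul : ∀ x y, E (x + y) = E x * E y) :
    ∃ b : ℝ, ∀ x, E x = Complex.exp (b * x * Complex.I) := by
  have hEne : ∀ x, E x ≠ 0 := by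
    intro x h0
    have := habs x
    rw [h0] at this
    simp at this
  have hE0 : E 0 = 1 := by
    have h := hmul 0 0
    rw [add_zero] at h
    have h2 : E 0 * 1 = E 0 * E 0 := by rw [mul_one, ← h]
    exact (mul_left_cancel₀ (hEne 0) h2).symm
  -- interval integrability
  have hii : ∀ a b : ℝ, IntervalIntegrable E volume a b := by
    intro a b
    constructor <;>
    · refine ⟨hmeas.aestronglyMeasurable.restrict, ?_⟩
      apply HasFiniteIntegral.of_bounded (C := 1)
      filter_upwards with x
      simp [habs x]
  set P : ℝ → ℂ := fun x => ∫ t in (0:ℝ)..x, E t with hP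
  have hPcont : Continuous P := continuous_primitive hii 0
  have key : ∀ x T : ℝ, (∫ t in x..(x + T), E t) = (∫ t in (0:ℝ)..T, E t) * E x := by
    intro x T
    have h1 : (∫ t in (0:ℝ)..T, E (t + x)) = ∫ t in (0+x)..(T+x), E t :=
      integral_comp_add_right E x
    have h2 : (∫ t in (0:ℝ)..T, E (t + x)) = (∫ t in (0:ℝ)..T, E t) * E x := by
      have : ∀ t, E (t + x) = E t * E x := fun t => by rw [← hmul]
      rw [intervalIntegral.integral_congr (g := fun t => E t * E x) (fun t _ => this t),
        intervalIntegral.integral_mul_const]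
    have h3 : (∫ t in (0:ℝ)..T, E (t + x)) = ∫ t in x..(x+T), E t := by
      rw [h1, zero_add, add_comm T x]
    rw [← h3, h2]
  -- exists T with nonzero integral
  have hT : ∃ T : ℝ, (∫ t in (0:ℝ)..T, E t) ≠ 0 := by
    by_contra h
    push_neg at h
    have hloc : LocallyIntegrable E volume := by
      intro x
      refine ⟨Ioo (x-1) (x+1), Ioo_mem_nhds (by linarith) (by linarith), ?_⟩
      have := (hii (x-1) (x+1)).1
      exact this.mono_set (Ioo_subset_Ioc_self)
    have hball : ∀ (x : ℝ) (r : ℝ), 0 < r → (∫ t in Metric.closedBall x r, E t) = 0 := by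
      intro x r hr
      rw [Real.closedBall_eq_Icc, integral_Icc_eq_integral_Ioc,
        ← intervalIntegral.integral_of_le (by linarith)]
      have := integral_interval_sub_left (hii 0 (x+r)) (hii 0 (x-r))
      rw [h, h, sub_zero] at this
      rw [← this]
    have hae := IsUnifLocDoublingMeasure.ae_tendsto_average (μ := (volume : Measure ℝ)) hloc 1
    obtain ⟨x, hx⟩ := hae.exists
    have hx2 := hx (ι := ℝ) (l := nhdsWithin 0 (Ioi 0)) (fun _ => x) id Filter.tendsto_id
      (by filter_upwards [self_mem_nhdsWithin] with j hj
          simp only [Metric.mem_closedBall, dist_self, id]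
          have : (0:ℝ) < j := hj
          linarith)
    have hzero : ∀ᶠ j in nhdsWithin (0:ℝ) (Ioi 0),
        (⨍ y in Metric.closedBall x (id j), E y) = 0 := by
      filter_upwards [self_mem_nhdsWithin] with j hj
      have hj' : (0:ℝ) < j := hj
      simp only [id_eq, setAverage_eq]
      rw [hball x j hj', smul_zero]
    have hten : Filter.Tendsto (fun _ : ℝ => (0:ℂ)) (nhdsWithin 0 (Ioi 0)) (nhds (E x)) :=
      Filter.Tendsto.congr' (by filter_upwards [hzero] with j hj using by simpa using hj) hx2
    have hEx0 : E x = 0 := tendsto_nhds_unique hten tendsto_const_nhds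
    exact hEne x hEx0
  obtain ⟨T, hIT⟩ := hT
  set I : ℂ := (∫ t in (0:ℝ)..T, E t) with hI
  have hEeq : ∀ x, E x = (P (x + T) - P x) / I := by
    intro x
    have hsub : P (x + T) - P x = ∫ t in x..(x+T), E t :=
      integral_interval_sub_left (hii 0 (x+T)) (hii 0 x)
    rw [hsub, key x T]
    field_simp
    rw [hI]
  have hfun : E = fun x => (P (x + T) - P x) / I := funext hEeq
  have hEcont : Continuous E := by
    rw [hfun]
    exact ((hPcont.comp (continuous_id.add continuous_const)).sub hPcont).div_const I
  have hPderiv : ∀ x, HasDerivAt P (E x) x := fun x =>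
    integral_hasDerivAt_right (hii 0 x)
      (hmeas.stronglyMeasurable.stronglyMeasurableAtFilter) hEcont.continuousAt
  set w : ℂ := (E T - 1) / I with hwdef
  have hEderiv : ∀ x, HasDerivAt E (w * E x) x := by
    intro x
    have hA : HasDerivAt (fun y => P (y + T)) (E (x + T)) x :=
      HasDerivAt.comp_add_const x T (hPderiv (x+T))
    have h1 : HasDerivAt (fun y => (P (y + T) - P y) / I) ((E (x+T) - E x)/I) x :=
      (hA.sub (hPderiv x)).div_const I
    rw [← hfun] at h1
    have heq : (E (x+T) - E x)/I = w * E x := by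
      rw [hmul x T, hwdef]
      field_simp
    rwa [heq] at h1
  have hd : ∀ x : ℝ, HasDerivAt (fun y : ℝ => E y * Complex.exp (-(w * y))) 0 x := by
    intro x
    have h0 : HasDerivAt (fun y : ℝ => ((y : ℝ) : ℂ)) (1:ℂ) x := (hasDerivAt_id x).ofReal_comp
    have h1 : HasDerivAt (fun y : ℝ => -(w * (y:ℂ))) (-w) x := by
      convert (h0.const_mul w).neg using 1 <;> first | rfl | simp
    have h2 : HasDerivAt (fun y : ℝ => Complex.exp (-(w * (y:ℂ))))
        (Complex.exp (-(w * (x:ℂ))) * (-w)) x := h1.cexp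
    have h3 := (hEderiv x).mul h2
    convert h3 using 1
    all_goals first | rfl | ring
  have hconst : ∀ x : ℝ, E x * Complex.exp (-(w * x)) = 1 := by
    intro x
    have h := is_const_of_deriv_eq_zero (f := fun y : ℝ => E y * Complex.exp (-(w * y)))
      (fun y => (hd y).differentiableAt) (fun y => (hd y).deriv) x 0
    simpa [hE0] using h
  have hEexp : ∀ x : ℝ, E x = Complex.exp (w * x) := by
    intro x
    have h := hconst x
    rw [Complex.exp_neg] at h
    field_simp at h
    exact h
  have hre : w.re = 0 := by
    have h := habs 1
    rw [hEexp 1, Complex.norm_exp] at h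
    have h2 : (w * ((1:ℝ):ℂ)).re = 0 := Real.exp_eq_exp.mp (by rw [h, Real.exp_zero])
    simpa using h2
  refine ⟨w.im, fun x => ?_⟩
  have hw : w = (w.im : ℂ) * Complex.I := by
    rw [← Complex.re_add_im w, hre]
    simp
  rw [hEexp x]
  congr 1
  nth_rewrite 1 [hw]
  ring



lemma cauchyLinear (a : ℝ → ℝ) (hmeas : Measurable a)
    (hadd : ∀ x y, a (x + y) = a x + a y) : ∀ x, a x = a 1 * x := by
  have ha0 : a 0 = 0 := by have := hadd 0 0; simp at this; linarith
  set E : ℝ → ℂ := fun x => Complex.exp ((a x : ℂ) * Complex.I) with hE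
  have hEmeas : Measurable E :=
    Complex.measurable_exp.comp ((Complex.measurable_ofReal.comp hmeas).mul_const _)
  have hEabs : ∀ x, ‖E x‖ = 1 := by
    intro x
    rw [hE]
    simp [Complex.norm_exp]
  have hEmul : ∀ x y, E (x + y) = E x * E y := by
    intro x y
    rw [hE]
    simp only [hadd, Complex.ofReal_add, add_mul, Complex.exp_add]
  obtain ⟨b, hb⟩ := circleHom E hEmeas hEabs hEmul
  have hz : ∀ x, ∃ n : ℤ, a x - b * x = n * (2 * Real.pi) := by
    intro x
    have h : Complex.exp ((a x : ℂ) * Complex.I) = Complex.exp (↑b * ↑x * Complex.I) := hb x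
    have h2 : Complex.exp (((a x - b * x : ℝ) : ℂ) * Complex.I) = 1 := by
      rw [Complex.ofReal_sub, sub_mul, Complex.exp_sub, h]
      rw [div_eq_one_iff_eq (Complex.exp_ne_zero _)]
      all_goals congr 1
      all_goals push_cast
      all_goals ring
    obtain ⟨n, hn⟩ := Complex.exp_eq_one_iff.mp h2
    refine ⟨n, ?_⟩
    have hI : ((a x - b * x : ℝ) : ℂ) = (n : ℂ) * (2 * Real.pi) := by
      have := hn
      rw [show (n : ℂ) * (2 * Real.pi * Complex.I) = ((n : ℂ) * (2 * Real.pi)) * Complex.I by ring]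
        at this
      exact mul_right_cancel₀ Complex.I_ne_zero this
    exact_mod_cast hI
  set c : ℝ → ℝ := fun x => a x - b * x with hc
  have hcadd : ∀ x y, c (x + y) = c x + c y := by
    intro x y
    simp only [hc, hadd]
    ring
  have hcsmul : ∀ (m : ℕ) (y : ℝ), c (m * y) = m * c y := by
    intro m
    induction m with
    | zero => intro y; simpa using (by have := hcadd 0 0; simp at this; linarith : c 0 = 0)
    | succ k ih =>
      intro y
      have : ((k:ℝ) + 1) * y = (k:ℝ) * y + y := by ring
      push_cast
      rw [this, hcadd, ih]
      ring
  have hc0 : ∀ x, c x = 0 := by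
    intro x
    obtain ⟨m, hm⟩ := exists_nat_gt (|c x| / (2 * Real.pi))
    have hm1 : (0:ℝ) < m + 1 := by positivity
    have hx : x = ((m+1 : ℕ) : ℝ) * (x / ((m+1 : ℕ) : ℝ)) := by
      push_cast
      field_simp
    obtain ⟨n, hn⟩ := hz (x / ((m+1 : ℕ):ℝ))
    have hcx : c x = ((m+1:ℕ):ℝ) * (n * (2 * Real.pi)) := by
      conv_lhs => rw [hx, hcsmul]
      all_goals rw [show c (x / ((m+1:ℕ):ℝ)) = (n:ℝ) * (2 * Real.pi) from hn]
    by_cases h0 : n = 0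
    · rw [hcx, h0]; simp
    · exfalso
      have hpi := Real.pi_pos
      have h1 : (1:ℝ) ≤ |(n:ℝ)| := by
        have : (1:ℤ) ≤ |n| := Int.one_le_abs (by exact_mod_cast h0)
        exact_mod_cast this
      have habs : |c x| = ((m+1:ℕ):ℝ) * (|(n:ℝ)| * (2 * Real.pi)) := by
        rw [hcx, abs_mul, abs_mul,
          abs_of_nonneg (by positivity : (0:ℝ) ≤ ((m+1:ℕ):ℝ)),
          abs_of_nonneg (by positivity : (0:ℝ) ≤ 2 * Real.pi)]
      have hup : |c x| < (m:ℝ) * (2 * Real.pi) :=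
        (div_lt_iff₀ (by positivity : (0:ℝ) < 2 * Real.pi)).mp hm
      have hcast : ((m+1:ℕ):ℝ) = (m:ℝ) + 1 := by push_cast; ring
      rw [hcast] at habs
      have hX : 2 * Real.pi ≤ |(n:ℝ)| * (2 * Real.pi) :=
        le_mul_of_one_le_left (by positivity) h1
      have hmn : (0:ℝ) ≤ (m:ℝ) := Nat.cast_nonneg m
      nlinarith [habs, hup, hX, hmn, hpi]
  intro x
  have h1 := hc0 1
  have hx := hc0 x
  simp only [hc] at h1 hx
  have : a 1 = b := by linarith
  rw [this]
  linarith


section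
variable (f : ℝ → ℝ) (δ₀ : ℝ)

lemma algebra_core (hf : Measurable f)
    (heq : ∀ α β δ : ℝ, f δ ≠ 0 → f (α + β) * f δ = f (α + δ) * f β + f (δ - β) * f α)
    (hδ₀ : f δ₀ ≠ 0) :
    ∃ g : ℝ → ℝ, Measurable g ∧ g 0 = 1 ∧ (∀ y, g (-y) = g y) ∧ (∀ x, f (-x) = - f x) ∧
      (∀ x y, f (x + y) = f x * g y + f y * g x) ∧
      ∃ K : ℝ, (∀ x y, g (x + y) = g x * g y + K * f x * f y) ∧
        (∀ x, g x ^ 2 - K * f x ^ 2 = 1) := by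
  have hf0 : f 0 = 0 := by
    have h := heq 0 0 δ₀ hδ₀
    rw [add_zero, zero_add, sub_zero] at h
    have h2 : f δ₀ * f 0 = 0 := by linarith
    rcases mul_eq_zero.mp h2 with h3 | h3
    · exact absurd h3 hδ₀
    · exact h3
  have hstar : ∀ x δ, f δ ≠ 0 → f x * f δ = f (-x) * f (-δ) := by
    intro x δ hδ
    have h := heq (-δ) (x + δ) δ hδ
    rw [show -δ + (x + δ) = x by ring, show -δ + δ = 0 by ring,
      show δ - (x + δ) = -x by ring, hf0] at h
    linarith
  have hodd : ∀ x, f (-x) = - f x := by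
    by_cases heven : f (-δ₀) = f δ₀
    · exfalso
      have hevenall : ∀ x, f (-x) = f x := by
        intro x
        have h := hstar x δ₀ hδ₀
        rw [heven] at h
        exact (mul_right_cancel₀ hδ₀ h.symm)
      have hsym : ∀ β, f (δ₀ + β) = f (δ₀ - β) := by
        intro β
        have h1 := heq δ₀ β δ₀ hδ₀
        have h2 := heq δ₀ (-β) δ₀ hδ₀
        rw [hevenall β, show δ₀ + -β = δ₀ - β by ring, show δ₀ - -β = δ₀ + β by ring] at h2
        have hduv : (f (δ₀ + β) - f (δ₀ - β)) * f δ₀ = 0 := by linarith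
        rcases mul_eq_zero.mp hduv with h3 | h3
        · linarith
        · exact absurd h3 hδ₀
      have hall : ∀ α β, f (α + β) = f (α - β) := by
        intro α β
        have h1 := heq α β δ₀ hδ₀
        have h2 := heq α (-β) δ₀ hδ₀
        rw [hevenall β, show α + -β = α - β by ring, show δ₀ - -β = δ₀ + β by ring,
          hsym β] at h2
        have hduv : (f (α + β) - f (α - β)) * f δ₀ = 0 := by linarith
        rcases mul_eq_zero.mp hduv with h3 | h3
        · linarith
        · exact absurd h3 hδ₀
      have h := hall (δ₀ / 2) (δ₀ / 2)
      rw [show δ₀ / 2 + δ₀ / 2 = δ₀ by ring, show δ₀ / 2 - δ₀ / 2 = 0 by ring, hf0] at h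
      exact hδ₀ h
    · have h := hstar δ₀ δ₀ hδ₀
      have hsq : (f (-δ₀) - f δ₀) * (f (-δ₀) + f δ₀) = 0 := by nlinarith [h]
      have hneg : f (-δ₀) = - f δ₀ := by
        rcases mul_eq_zero.mp hsq with h3 | h3
        · exact absurd (by linarith) heven
        · linarith
      intro x
      have h2 := hstar x δ₀ hδ₀
      rw [hneg] at h2
      have h3 : (f (-x) + f x) * f δ₀ = 0 := by linarith [h2]
      rcases mul_eq_zero.mp h3 with h4 | h4
      · linarith
      · exact absurd h4 hδ₀
  obtain ⟨g, hgdef⟩ : ∃ g : ℝ → ℝ, ∀ y, g y = (f (δ₀ + y) + f (δ₀ - y)) / (2 * f δ₀) :=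
    ⟨_, fun _ => rfl⟩
  have hgmeas : Measurable g := by
    rw [funext hgdef]
    exact ((hf.comp (measurable_const.add measurable_id)).add
      (hf.comp (measurable_const.sub measurable_id))).div_const _
  have hg0 : g 0 = 1 := by
    rw [hgdef 0, add_zero, sub_zero]
    field_simp
    ring
  have hgeven : ∀ y, g (-y) = g y := by
    intro y
    rw [hgdef, hgdef, show δ₀ + -y = δ₀ - y by ring, show δ₀ - -y = δ₀ + y by ring]
    ring
  have hW : ∀ x y, f (x + y) + f (x - y) = 2 * f x * g y := by
    intro x y
    have h1 := heq x y δ₀ hδ₀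
    have h2 := heq x (-y) δ₀ hδ₀
    rw [hodd y, show x + -y = x - y by ring, show δ₀ - -y = δ₀ + y by ring] at h2
    have hgy : g y * (2 * f δ₀) = f (δ₀ + y) + f (δ₀ - y) := by
      rw [hgdef y]
      field_simp
    have hkey : (f (x + y) + f (x - y)) * f δ₀ = (2 * f x * g y) * f δ₀ := by
      linear_combination h1 + h2 - f x * hgy
    exact mul_right_cancel₀ hδ₀ hkey
  have hS : ∀ x y, f (x + y) = f x * g y + f y * g x := by
    intro x y
    have h1 := hW x y
    have h2 := hW y x
    rw [show y + x = x + y by ring, show y - x = -(x - y) by ring, hodd] at h2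
    linarith
  have hD : ∀ y z, g (y + z) + g (y - z) = 2 * g y * g z := by
    intro y z
    have e1 := hW (δ₀ + y) z
    have e2 := hW (δ₀ - y) z
    have e3 := hW δ₀ (y + z)
    have e4 := hW δ₀ (y - z)
    have e5 := hW δ₀ y
    rw [show δ₀ + y + z = δ₀ + (y + z) by ring, show δ₀ + y - z = δ₀ + (y - z) by ring] at e1
    rw [show δ₀ - y + z = δ₀ - (y - z) by ring, show δ₀ - y - z = δ₀ - (y + z) by ring] at e2
    have hkey : (g (y + z) + g (y - z)) * (2 * f δ₀) = (2 * g y * g z) * (2 * f δ₀) := by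
      linear_combination e1 + e2 + 2 * g z * e5 - e3 - e4
    have h2fδ : (2 : ℝ) * f δ₀ ≠ 0 := by
      intro h
      have : f δ₀ = 0 := by linarith
      exact hδ₀ this
    exact mul_right_cancel₀ h2fδ hkey
  have hassoc : ∀ x y z, f z * (g (x + y) - g x * g y) = f x * (g (y + z) - g y * g z) := by
    intro x y z
    have e1 := hS (x + y) z
    have e2 := hS x y
    have e3 := hS x (y + z)
    have e4 := hS y z
    rw [show x + y + z = x + (y + z) by ring] at e1
    linear_combination e3 - e1 - g z * e2 + g x * e4
  obtain ⟨K, hKdef⟩ : ∃ K : ℝ, K = (g (δ₀ + δ₀) - g δ₀ * g δ₀) / (f δ₀ * f δ₀) := ⟨_, rfl⟩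
  have hKmul : K * (f δ₀ * f δ₀) = g (δ₀ + δ₀) - g δ₀ * g δ₀ := by
    rw [hKdef]; field_simp
  have hC : ∀ x y, g (x + y) = g x * g y + K * f x * f y := by
    intro x y
    have h1 := hassoc x y δ₀
    have h5 := hassoc y δ₀ δ₀
    have hkey : (g (x + y)) * (f δ₀ * f δ₀) = (g x * g y + K * f x * f y) * (f δ₀ * f δ₀) := by
      linear_combination f δ₀ * h1 + f x * h5 - f x * f y * hKmul
    exact mul_right_cancel₀ (mul_ne_zero hδ₀ hδ₀) hkey
  have hP : ∀ x, g x ^ 2 - K * f x ^ 2 = 1 := by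
    intro x
    have h := hC x (-x)
    rw [show x + -x = (0:ℝ) by ring, hg0, hodd x, hgeven x] at h
    linear_combination -h
  exact ⟨g, hgmeas, hg0, hgeven, hodd, hS, K, hC, hP⟩
end

lemma genSin_sq (t : ℝ) (ht : t ≠ 0) (x : ℝ) : genSin (t ^ 2) x = Real.sin (t * x) / t := by
  have h1 : (0:ℝ) < t ^ 2 := by positivity
  unfold genSin
  rw [if_pos h1, Real.sqrt_sq_eq_abs]
  rcases lt_or_gt_of_ne ht with h | h
  · rw [abs_of_neg h, show -t * x = -(t * x) by ring, Real.sin_neg]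
    rw [show Real.sin (t*x) / t = -Real.sin (t*x) / -t by rw [neg_div_neg_eq]]
  · rw [abs_of_pos h]

lemma genSinh_sq (t : ℝ) (ht : t ≠ 0) (x : ℝ) : genSin (-t ^ 2) x = Real.sinh (t * x) / t := by
  have h1 : ¬ (0:ℝ) < -t ^ 2 := by nlinarith [sq_nonneg t]
  have h2 : -t ^ 2 ≠ 0 := by simpa using pow_ne_zero 2 ht
  unfold genSin
  rw [if_neg h1, if_neg h2, neg_neg, Real.sqrt_sq_eq_abs]
  rcases lt_or_gt_of_ne ht with h | h
  · rw [abs_of_neg h, show -t * x = -(t * x) by ring, Real.sinh_neg]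
    rw [show Real.sinh (t*x) / t = -Real.sinh (t*x) / -t by rw [neg_div_neg_eq]]
  · rw [abs_of_pos h]

lemma genSin_eq (k α β δ : ℝ) :
    genSin k (α + β) * genSin k δ = genSin k (α + δ) * genSin k β + genSin k (δ - β) * genSin k α := by
  unfold genSin
  split_ifs with h1 h2
  all_goals beta_reduce
  · obtain ⟨r, hr⟩ : ∃ r : ℝ, r = Real.sqrt k := ⟨_, rfl⟩
    rw [← hr]
    have hrne : r ≠ 0 := by rw [hr]; exact (Real.sqrt_pos.mpr h1).ne'
    rw [show r * (α + β) = r * α + r * β by ring, show r * (α + δ) = r * α + r * δ by ring,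
      show r * (δ - β) = r * δ - r * β by ring, Real.sin_add, Real.sin_add, Real.sin_sub]
    field_simp
    ring
  · ring
  · obtain ⟨r, hr⟩ : ∃ r : ℝ, r = Real.sqrt (-k) := ⟨_, rfl⟩
    rw [← hr]
    have hrne : r ≠ 0 := by
      rw [hr]
      have : 0 < -k := by
        push_neg at h1
        rcases h1.lt_or_eq with h | h
        · linarith
        · exact absurd h h2
      exact (Real.sqrt_pos.mpr this).ne'
    rw [show r * (α + β) = r * α + r * β by ring, show r * (α + δ) = r * α + r * δ by ring,
      show r * (δ - β) = r * δ - r * β by ring, Real.sinh_add, Real.sinh_add, Real.sinh_sub]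
    field_simp
    ring

theorem funcEq_characterization (f : ℝ → ℝ) (hf : Measurable f) :
    (∀ α β δ : ℝ, f δ ≠ 0 →
        f (α + β) * f δ = f (α + δ) * f β + f (δ - β) * f α) ↔
      ∃ c k : ℝ, ∀ x, f x = c * genSin k x := by
  constructor
  · intro heq
    by_cases hzero : ∀ x, f x = 0
    · exact ⟨0, 0, fun x => by rw [hzero x, zero_mul]⟩
    push_neg at hzero
    obtain ⟨δ₀, hδ₀⟩ := hzero
    obtain ⟨g, hgmeas, hg0, hgeven, hodd, hS, K, hC, hP⟩ := algebra_core f δ₀ hf heq hδ₀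
    rcases lt_trichotomy K 0 with hK | hK | hK
    · -- sine case
      obtain ⟨r, hr⟩ : ∃ r : ℝ, r = Real.sqrt (-K) := ⟨_, rfl⟩
      have hrpos : 0 < r := by rw [hr]; exact Real.sqrt_pos.mpr (by linarith)
      have hr2 : r ^ 2 = -K := by rw [hr]; exact Real.sq_sqrt (by linarith)
      obtain ⟨E, hEdef⟩ : ∃ E : ℝ → ℂ, ∀ x, E x = (g x : ℂ) + ((r * f x : ℝ) : ℂ) * Complex.I :=
        ⟨_, fun _ => rfl⟩
      have hEre : ∀ x, (E x).re = g x := by intro x; rw [hEdef]; simp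
      have hEim : ∀ x, (E x).im = r * f x := by intro x; rw [hEdef]; simp
      have hEmeas : Measurable E := by
        rw [funext hEdef]
        exact (Complex.measurable_ofReal.comp hgmeas).add
          ((Complex.measurable_ofReal.comp (hf.const_mul r)).mul_const _)
      have hEmul : ∀ x y, E (x + y) = E x * E y := by
        intro x y
        apply Complex.ext
        · rw [Complex.mul_re, hEre, hEre, hEre, hEim, hEim]
          linear_combination hC x y + f x * f y * hr2
        · rw [Complex.mul_im, hEre, hEre, hEim, hEim, hEim]
          linear_combination r * hS x y
      have habs : ∀ x, ‖E x‖ = 1 := by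
        intro x
        have hsq : Complex.normSq (E x) = 1 := by
          rw [Complex.normSq_apply, hEre, hEim]
          linear_combination hP x + f x ^ 2 * hr2
        rw [Complex.norm_def, hsq, Real.sqrt_one]
      obtain ⟨b, hb⟩ := circleHom E hEmeas habs hEmul
      have hfspec : ∀ x, f x = Real.sin (b * x) / r := by
        intro x
        have h := congrArg Complex.im (hb x)
        rw [hEim] at h
        have h2 : (Complex.exp ((b:ℂ) * (x:ℂ) * Complex.I)).im = Real.sin (b * x) := by
          rw [show (b:ℂ) * (x:ℂ) * Complex.I = ((b * x : ℝ) : ℂ) * Complex.I by push_cast; ring]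
          exact Complex.exp_ofReal_mul_I_im (b * x)
        rw [h2] at h
        field_simp
        linarith
      have hb0 : b ≠ 0 := by
        intro h0
        apply hδ₀
        rw [hfspec δ₀, h0]
        simp
      refine ⟨b / r, b ^ 2, fun x => ?_⟩
      rw [hfspec x, genSin_sq b hb0 x]
      field_simp
    · -- linear case
      have hg1 : ∀ x, g x = 1 := by
        intro x
        have hsq : g x ^ 2 = 1 := by have := hP x; rw [hK] at this; linarith
        have hhalf : g x = g (x / 2) ^ 2 := by
          have h := hC (x / 2) (x / 2)
          rw [hK, show x / 2 + x / 2 = x by ring] at h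
          linear_combination h
        have hnn : 0 ≤ g x := by rw [hhalf]; positivity
        nlinarith
      have hadd : ∀ x y, f (x + y) = f x + f y := by
        intro x y
        rw [hS, hg1, hg1]
        ring
      have hlin := cauchyLinear f hf hadd
      refine ⟨f 1, 0, fun x => ?_⟩
      rw [hlin x]
      unfold genSin
      norm_num
    · -- sinh case
      obtain ⟨r, hr⟩ : ∃ r : ℝ, r = Real.sqrt K := ⟨_, rfl⟩
      have hrpos : 0 < r := by rw [hr]; exact Real.sqrt_pos.mpr hK
      have hr2 : r ^ 2 = K := by rw [hr]; exact Real.sq_sqrt hK.le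
      obtain ⟨E, hEdef⟩ : ∃ E : ℝ → ℝ, ∀ x, E x = g x + r * f x := ⟨_, fun _ => rfl⟩
      have hEmul : ∀ x y, E (x + y) = E x * E y := by
        intro x y
        rw [hEdef, hEdef, hEdef]
        linear_combination hC x y + r * hS x y - f x * f y * hr2
      have hEneg : ∀ x, E x * E (-x) = 1 := by
        intro x
        rw [hEdef, hEdef, hodd, hgeven]
        linear_combination hP x - f x ^ 2 * hr2
      have hEne : ∀ x, E x ≠ 0 := by
        intro x h0
        have := hEneg x
        rw [h0, zero_mul] at this
        norm_num at this
      have hEpos : ∀ x, 0 < E x := by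
        intro x
        have h := hEmul (x / 2) (x / 2)
        rw [show x / 2 + x / 2 = x by ring] at h
        have hnn : 0 ≤ E x := h ▸ mul_self_nonneg (E (x / 2))
        exact lt_of_le_of_ne hnn (Ne.symm (hEne x))
      have hEmeas : Measurable E := by
        rw [funext hEdef]
        exact hgmeas.add (hf.const_mul r)
      obtain ⟨a, hadef⟩ : ∃ a : ℝ → ℝ, ∀ x, a x = Real.log (E x) := ⟨_, fun _ => rfl⟩
      have hameas : Measurable a := by
        rw [funext hadef]
        exact Real.measurable_log.comp hEmeas
      have haadd : ∀ x y, a (x + y) = a x + a y := by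
        intro x y
        rw [hadef, hadef, hadef, hEmul, Real.log_mul (hEne x) (hEne y)]
      have hax := cauchyLinear a hameas haadd
      have hEexp : ∀ x, E x = Real.exp (a 1 * x) := by
        intro x
        rw [← hax x, hadef, Real.exp_log (hEpos x)]
      have hfspec : ∀ x, f x = Real.sinh (a 1 * x) / r := by
        intro x
        have h1 := hEdef x
        have h2 := hEdef (-x)
        rw [hodd, hgeven] at h2
        have hsub : E x - E (-x) = 2 * r * f x := by rw [h1, h2]; ring
        rw [hEexp, hEexp, show a 1 * -x = -(a 1 * x) by ring] at hsub
        rw [Real.sinh_eq]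
        field_simp
        linarith
      have ht : a 1 ≠ 0 := by
        intro h0
        apply hδ₀
        rw [hfspec δ₀, h0]
        simp
      refine ⟨a 1 / r, -(a 1) ^ 2, fun x => ?_⟩
      rw [hfspec x, genSinh_sq (a 1) ht x]
      field_simp
  · rintro ⟨c, k, hck⟩ α β δ hδ
    simp only [hck]
    linear_combination c ^ 2 * genSin_eq k α β δ
end

section
/- Let H be a real inner product space, d ≥ 1, v₁,…,v_{d+1} ∈ H with v₁,…,v_{d+1} all nonzero, and define the polar sine |p_d sin₀(v₁,…,v_{d+1})| = sqrt(det Gram(v₁,…,v_{d+1})) / ∏ⱼ‖vⱼ‖ (set to 0 if some vⱼ = 0). Then |p_d sin₀(v₁,…,v_{d+1})| = sin(θ(v_{d+1}, span{v₁,…,v_d})) · |p_{d−1} sin₀(v₁,…,v_d)|, where sin(θ(u,W)) := dist(u,W)/‖u‖ is the elevation sine of u with respect to the subspace W. -/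
open scoped RealInnerProductSpace

/-- The `k`-dimensional content: the square root of the Gram determinant. -/
noncomputable def gramContent {H : Type*} [NormedAddCommGroup H] [InnerProductSpace ℝ H]
    {k : ℕ} (v : Fin k → H) : ℝ :=
  Real.sqrt (Matrix.det (Matrix.of fun i j => ⟪v i, v j⟫))

/-- The polar sine at the origin: the Gram content divided by the product of the norms
(equal to `0` if some vector vanishes, by the convention `x / 0 = 0`). -/
noncomputable def polarSin {H : Type*} [NormedAddCommGroup H] [InnerProductSpace ℝ H]
    {k : ℕ} (v : Fin k → H) : ℝ :=
  gramContent v / ∏ j, ‖v j‖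

private theorem gram_transform {H : Type*} [NormedAddCommGroup H] [InnerProductSpace ℝ H]
    {n : ℕ} (v v' : Fin n → H) (A : Matrix (Fin n) (Fin n) ℝ)
    (h : ∀ i, v' i = ∑ j, A i j • v j) :
    (Matrix.of fun i j => ⟪v' i, v' j⟫) =
      A * (Matrix.of fun i j => ⟪v i, v j⟫) * A.transpose := by
  ext i j
  simp only [Matrix.of_apply, h, Matrix.mul_apply, Matrix.transpose_apply, sum_inner,
    inner_sum, real_inner_smul_left, real_inner_smul_right, Finset.sum_mul, Finset.mul_sum]
  conv_lhs => rw [Finset.sum_comm]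
  conv_rhs => rw [Finset.sum_comm]
  refine Finset.sum_congr rfl fun k _ => Finset.sum_congr rfl fun l _ => by ring

private theorem gram_det_snoc {H : Type*} [NormedAddCommGroup H] [InnerProductSpace ℝ H]
    {d : ℕ} (f : Fin d → H) (u : H) (horth : ∀ i, ⟪f i, u⟫ = 0) :
    (Matrix.det (Matrix.of fun i j : Fin (d+1) =>
        ⟪(Fin.snoc f u : Fin (d+1) → H) i, (Fin.snoc f u : Fin (d+1) → H) j⟫)) =
      ‖u‖ ^ 2 * Matrix.det (Matrix.of fun i j => ⟪f i, f j⟫) := by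
  rw [Matrix.det_succ_row _ (Fin.last d)]
  rw [Finset.sum_eq_single (Fin.last d)]
  · simp only [Matrix.of_apply, Fin.snoc_last, Fin.succAbove_last, Matrix.submatrix]
    rw [real_inner_self_eq_norm_sq]
    simp [Fin.snoc_castSucc, pow_succ, mul_comm, mul_assoc]
  · intro j _ hj
    rcases Fin.exists_castSucc_eq.2 hj with ⟨k, rfl⟩
    simp [Fin.snoc_last, Fin.snoc_castSucc, real_inner_comm (f k) u, horth k]
  · simp

theorem polarSin_product_formula {H : Type*} [NormedAddCommGroup H] [InnerProductSpace ℝ H]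
    {d : ℕ} (hd : 1 ≤ d) (v : Fin (d + 1) → H) (hv : ∀ i, v i ≠ 0) :
    polarSin v =
      (Metric.infDist (v (Fin.last d))
          (Submodule.span ℝ (Set.range fun i : Fin d => v i.castSucc) : Set H) /
        ‖v (Fin.last d)‖) *
        polarSin (fun i : Fin d => v i.castSucc) := by
  classical
  set f : Fin d → H := fun i => v i.castSucc with hf
  set w : H := v (Fin.last d) with hw
  set W : Submodule ℝ H := Submodule.span ℝ (Set.range f) with hWdef
  haveI : FiniteDimensional ℝ W := FiniteDimensional.span_of_finite ℝ (Set.finite_range f)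
  set p : H := (W.orthogonalProjectionOnto w : H) with hp
  set u : H := w - p with hu
  have hu_orth : u ∈ Wᗮ := W.sub_starProjection_mem_orthogonal w
  have horth : ∀ i : Fin d, ⟪f i, u⟫ = 0 := fun i =>
    hu_orth (f i) (Submodule.subset_span (Set.mem_range_self i))
  have hdist : Metric.infDist w (W : Set H) = ‖u‖ := by
    rw [Metric.infDist_eq_iInf, hu, hp, ← Submodule.starProjection_apply, Submodule.starProjection_minimal]
    simp [dist_eq_norm]
  -- the coefficients of p in terms of f
  obtain ⟨c, hc⟩ := (Submodule.mem_span_range_iff_exists_fun ℝ).1 (W.orthogonalProjectionOnto w).2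
  -- change-of-basis matrix
  set c' : Fin (d + 1) → ℝ := Fin.snoc c 0 with hc'
  set A : Matrix (Fin (d + 1)) (Fin (d + 1)) ℝ :=
    Matrix.of fun i j => if i = Fin.last d then
      (if j = Fin.last d then 1 else -c' j) else (if i = j then 1 else 0) with hA
  have hvA : ∀ i, (Fin.snoc f u : Fin (d + 1) → H) i = ∑ j, A i j • v j := by
    intro i
    induction i using Fin.lastCases with
    | last =>
      rw [Fin.sum_univ_castSucc]
      have h1 : ∀ k : Fin d, A (Fin.last d) k.castSucc • v k.castSucc = -(c k • f k) := by
        intro k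
        simp [hA, hf, Fin.castSucc_lt_last k |>.ne, hc', Fin.snoc_castSucc, neg_smul]
      simp only [h1]
      have h2 : A (Fin.last d) (Fin.last d) = 1 := by simp [hA]
      rw [h2, one_smul, Finset.sum_neg_distrib, hc, Fin.snoc_last]
      rw [hu, ← hw]; abel
    | cast k =>
      have h3 : ∀ j, A k.castSucc j = if k.castSucc = j then 1 else 0 := by
        intro j; simp [hA, Fin.castSucc_lt_last k |>.ne]
      simp only [h3, ite_smul, one_smul, zero_smul, Finset.sum_ite_eq, Finset.mem_univ,
        if_true, Fin.snoc_castSucc]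
      rfl
  -- A is lower triangular with unit diagonal
  have hAdet : A.det = 1 := by
    rw [Matrix.det_of_lowerTriangular A]
    · apply Finset.prod_eq_one
      intro i _
      by_cases h : i = Fin.last d <;> simp [hA, h]
    · intro i j hij
      have hij' : i < j := by simpa using hij
      have : i ≠ Fin.last d := Fin.ne_last_of_lt hij'
      simp [hA, this, hij'.ne]
  -- determinant identity
  have hdet : Matrix.det (Matrix.of fun i j => ⟪v i, v j⟫) =
      ‖u‖ ^ 2 * Matrix.det (Matrix.of fun i j => ⟪f i, f j⟫) := by
    have := gram_transform v (Fin.snoc f u : Fin (d + 1) → H) A hvA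
    rw [← gram_det_snoc f u horth, this, Matrix.det_mul, Matrix.det_mul,
      Matrix.det_transpose, hAdet, one_mul, mul_one]
  -- assemble
  have hwnorm : ‖w‖ ≠ 0 := norm_ne_zero_iff.2 (hv (Fin.last d))
  have hgc : gramContent v = ‖u‖ * gramContent f := by
    rw [gramContent, hdet, Real.sqrt_mul (sq_nonneg _), Real.sqrt_sq (norm_nonneg _)]
    rfl
  have hprod : (∏ j, ‖v j‖) = (∏ j, ‖f j‖) * ‖w‖ := by
    rw [Fin.prod_univ_castSucc]
  rw [polarSin, polarSin, hgc, hprod, hdist]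
  rw [div_mul_div_comm, mul_comm (∏ j, ‖f j‖) ‖w‖]
end

section
/- Let H be a real inner product space, V a (d+1)-dimensional subspace of H, v₁,…,v_d ∈ V, u ∈ H, and P_V the orthogonal projection onto V. Then |p_d sin₀(v₁,…,v_d,P_V(u))| ≤ |p_d sin₀(v₁,…,v_d,u)|, where |p_d sin₀(w₁,…,w_{d+1})| = sqrt(det Gram(w₁,…,w_{d+1}))/∏ⱼ‖wⱼ‖ (defined as 0 if some ‖wⱼ‖ = 0). -/
open scoped RealInnerProductSpace

section AuxGram

open Matrix Finset

variable {H : Type*} [NormedAddCommGroup H] [InnerProductSpace ℝ H]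

lemma gramDet_snoc_eq {d : ℕ} (v : Fin d → H) (x y : H)
    (h1 : ∀ i, ⟪x - y, v i⟫ = 0) (h2 : ⟪x - y, y⟫ = 0) :
    (Matrix.of fun i j => ⟪(Fin.snoc v x : Fin (d+1) → H) i, (Fin.snoc v x : Fin (d+1) → H) j⟫ :
        Matrix (Fin (d+1)) (Fin (d+1)) ℝ).det
      = (Matrix.of fun i j => ⟪(Fin.snoc v y : Fin (d+1) → H) i, (Fin.snoc v y : Fin (d+1) → H) j⟫ :
          Matrix (Fin (d+1)) (Fin (d+1)) ℝ).det
        + ‖x - y‖ ^ 2 *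
          (Matrix.of fun i j => ⟪v i, v j⟫ : Matrix (Fin d) (Fin d) ℝ).det := by
  set M : Matrix (Fin (d+1)) (Fin (d+1)) ℝ :=
    Matrix.of fun i j => ⟪(Fin.snoc v y : Fin (d+1) → H) i, (Fin.snoc v y : Fin (d+1) → H) j⟫
      with hM
  set g : Fin (d+1) → ℝ := fun i => if i = Fin.last d then ‖x - y‖ ^ 2 else 0 with hg
  have hxy : ∀ z : H, ⟪z, x⟫ = ⟪z, y⟫ + ⟪x - y, z⟫ := by
    intro z
    have h3 : ⟪z, x - y⟫ = ⟪z, x⟫ - ⟪z, y⟫ := inner_sub_right z x y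
    have h4 := real_inner_comm (x - y) z
    linarith
  have hG : (Matrix.of fun i j =>
        ⟪(Fin.snoc v x : Fin (d+1) → H) i, (Fin.snoc v x : Fin (d+1) → H) j⟫ :
        Matrix (Fin (d+1)) (Fin (d+1)) ℝ)
      = M.updateCol (Fin.last d) ((fun i => M i (Fin.last d)) + g) := by
    ext i j
    rw [Matrix.updateCol_apply]
    by_cases hj : j = Fin.last d
    · subst hj
      refine Fin.lastCases ?_ ?_ i
      · simp only [if_pos rfl, Matrix.of_apply, Fin.snoc_last, hM, hg, Pi.add_apply, if_pos rfl, if_true]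
        have h3 := hxy x
        have h4 := hxy y
        have h7 := real_inner_comm x y
        have h5 : ⟪x - y, x⟫ = ⟪x - y, y⟫ + ⟪x - y, x - y⟫ := by
          have := inner_sub_right (𝕜 := ℝ) (x - y) x y; linarith
        have h6 : ⟪x - y, x - y⟫ = ‖x - y‖ ^ 2 := real_inner_self_eq_norm_sq (x - y)
        linarith
      · intro i'
        simp only [if_pos rfl, Matrix.of_apply, Fin.snoc_last, Fin.snoc_castSucc, hM, hg,
          Pi.add_apply, if_neg (Fin.castSucc_lt_last i').ne, add_zero, if_true]
        rw [hxy (v i'), h1 i', add_zero]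
    · rw [if_neg hj]
      obtain ⟨j', rfl⟩ := Fin.exists_castSucc_eq.mpr hj
      refine Fin.lastCases ?_ ?_ i
      · simp only [Matrix.of_apply, Fin.snoc_last, Fin.snoc_castSucc, hM]
        have h3 := inner_sub_left (𝕜 := ℝ) x y (v j')
        have h4 := h1 j'
        linarith
      · intro i'
        simp [hM]
  rw [hG, Matrix.det_updateCol_add M (Fin.last d) (fun i => M i (Fin.last d)) g,
    Matrix.updateCol_eq_self]
  congr 1
  rw [Matrix.det_succ_column _ (Fin.last d)]
  rw [Finset.sum_eq_single (Fin.last d)]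
  · have hsub : ((M.updateCol (Fin.last d) g).submatrix (Fin.last d).succAbove
        (Fin.last d).succAbove) = (Matrix.of fun i j => ⟪v i, v j⟫ : Matrix (Fin d) (Fin d) ℝ) := by
      ext i j
      simp [Fin.succAbove_last, Matrix.updateCol_apply, (Fin.castSucc_lt_last j).ne, hM]
    rw [Matrix.updateCol_apply, if_pos rfl, hsub, hg]
    have hpow : ((-1 : ℝ)) ^ ((Fin.last d : ℕ) + (Fin.last d : ℕ)) = 1 := by
      simp [Fin.val_last, ← two_mul, pow_mul]
    rw [hpow, one_mul]
    simp
  · intro i _ hi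
    rw [Matrix.updateCol_apply, if_pos rfl, hg]
    simp [if_neg hi]
  · intro h; exact absurd (Finset.mem_univ _) h

lemma gramDet_snoc_mem {d : ℕ} (v : Fin d → H) {y : H}
    (hy : y ∈ Submodule.span ℝ (Set.range v)) :
    (Matrix.of fun i j => ⟪(Fin.snoc v y : Fin (d+1) → H) i, (Fin.snoc v y : Fin (d+1) → H) j⟫ :
        Matrix (Fin (d+1)) (Fin (d+1)) ℝ).det = 0 := by
  obtain ⟨c, hc⟩ := (Submodule.mem_span_range_iff_exists_fun ℝ).mp hy
  rw [← Matrix.exists_mulVec_eq_zero_iff]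
  refine ⟨(Fin.snoc c (-1) : Fin (d+1) → ℝ), ?_, ?_⟩
  · intro h
    have := congrFun h (Fin.last d)
    simp at this
  · ext i
    have hmv : ((Matrix.of fun i j =>
          ⟪(Fin.snoc v y : Fin (d+1) → H) i, (Fin.snoc v y : Fin (d+1) → H) j⟫ :
          Matrix (Fin (d+1)) (Fin (d+1)) ℝ) *ᵥ (Fin.snoc c (-1) : Fin (d+1) → ℝ)) i
        = ∑ j, ⟪(Fin.snoc v y : Fin (d+1) → H) i,
            (Fin.snoc c (-1) : Fin (d+1) → ℝ) j • (Fin.snoc v y : Fin (d+1) → H) j⟫ := by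
      simp [Matrix.mulVec, dotProduct, real_inner_smul_right, mul_comm]
    rw [Pi.zero_apply, hmv, ← inner_sum]
    have hsum : (∑ j, (Fin.snoc c (-1) : Fin (d+1) → ℝ) j • (Fin.snoc v y : Fin (d+1) → H) j)
        = 0 := by
      rw [Fin.sum_univ_castSucc]
      simp only [Fin.snoc_castSucc, Fin.snoc_last, neg_one_smul]
      rw [hc]
      abel
    rw [hsum, inner_zero_right]

lemma gramDet_snoc_proj {d : ℕ} (v : Fin d → H) (x : H) :
    ∃ q ∈ Submodule.span ℝ (Set.range v),
      (Matrix.of fun i j =>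
          ⟪(Fin.snoc v x : Fin (d+1) → H) i, (Fin.snoc v x : Fin (d+1) → H) j⟫ :
        Matrix (Fin (d+1)) (Fin (d+1)) ℝ).det
      = ‖x - q‖ ^ 2 * (Matrix.of fun i j => ⟪v i, v j⟫ : Matrix (Fin d) (Fin d) ℝ).det := by
  haveI : FiniteDimensional ℝ (Submodule.span ℝ (Set.range v)) :=
    FiniteDimensional.span_of_finite ℝ (Set.finite_range v)
  set W := Submodule.span ℝ (Set.range v) with hW
  set q : H := ((W.orthogonalProjectionOnto x : W) : H) with hq
  have hqW : q ∈ W := SetLike.coe_mem _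
  have hperp : ∀ z ∈ W, ⟪x - q, z⟫ = 0 := Submodule.starProjection_inner_eq_zero (K := W) x
  exact ⟨q, hqW, by
    rw [gramDet_snoc_eq v x q
      (fun i => hperp _ (Submodule.subset_span (Set.mem_range_self i))) (hperp q hqW),
      gramDet_snoc_mem v hqW, zero_add]⟩

lemma gramDet_nonneg : ∀ {k : ℕ} (v : Fin k → H),
    0 ≤ (Matrix.of fun i j => ⟪v i, v j⟫ : Matrix (Fin k) (Fin k) ℝ).det := by
  intro k
  induction k with
  | zero => intro v; simp
  | succ k ih =>
    intro v
    obtain ⟨q, -, h⟩ := gramDet_snoc_proj (Fin.init v) (v (Fin.last k))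
    rw [show (Fin.snoc (Fin.init v) (v (Fin.last k)) : Fin (k+1) → H) = v from
      Fin.snoc_init_self v] at h
    rw [h]
    exact mul_nonneg (sq_nonneg _) (ih _)

end AuxGram

theorem polarSin_projection_le {H : Type*} [NormedAddCommGroup H] [InnerProductSpace ℝ H]
    {d : ℕ} (V : Submodule ℝ H) [FiniteDimensional ℝ V]
    (hV : Module.finrank ℝ V = d + 1)
    (v : Fin d → H) (hv : ∀ i, v i ∈ V) (u : H) :
    polarSin (Fin.snoc v ((V.orthogonalProjectionOnto u : V) : H)) ≤
      polarSin (Fin.snoc v u) := by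
  classical
  haveI : FiniteDimensional ℝ (Submodule.span ℝ (Set.range v)) :=
    FiniteDimensional.span_of_finite ℝ (Set.finite_range v)
  set W := Submodule.span ℝ (Set.range v) with hWdef
  set P : H := ((V.orthogonalProjectionOnto u : V) : H) with hPdef
  have hPV : P ∈ V := SetLike.coe_mem _
  have hWV : W ≤ V := Submodule.span_le.mpr (by rintro _ ⟨i, rfl⟩; exact hv i)
  have hu_perp : ∀ z ∈ V, ⟪u - P, z⟫ = 0 := Submodule.starProjection_inner_eq_zero (K := V) u
  set q : H := ((W.orthogonalProjectionOnto P : W) : H) with hqdef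
  have hqW : q ∈ W := SetLike.coe_mem _
  have hP_perp : ∀ z ∈ W, ⟪P - q, z⟫ = 0 := Submodule.starProjection_inner_eq_zero (K := W) P
  set b := (Matrix.of fun i j => ⟪v i, v j⟫ : Matrix (Fin d) (Fin d) ℝ).det with hb
  have hb0 : 0 ≤ b := gramDet_nonneg v
  have hAP : (Matrix.of fun i j =>
        ⟪(Fin.snoc v P : Fin (d+1) → H) i, (Fin.snoc v P : Fin (d+1) → H) j⟫ :
        Matrix (Fin (d+1)) (Fin (d+1)) ℝ).det = ‖P - q‖ ^ 2 * b := by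
    rw [gramDet_snoc_eq v P q
      (fun i => hP_perp _ (Submodule.subset_span (Set.mem_range_self i))) (hP_perp q hqW),
      gramDet_snoc_mem v hqW, zero_add]
  have huq : ∀ z ∈ W, ⟪u - q, z⟫ = 0 := by
    intro z hz
    have h1 := hu_perp z (hWV hz)
    have h2 := hP_perp z hz
    have h3 : u - q = (u - P) + (P - q) := by abel
    rw [h3, inner_add_left, h1, h2, add_zero]
  have hAu : (Matrix.of fun i j =>
        ⟪(Fin.snoc v u : Fin (d+1) → H) i, (Fin.snoc v u : Fin (d+1) → H) j⟫ :
        Matrix (Fin (d+1)) (Fin (d+1)) ℝ).det = ‖u - q‖ ^ 2 * b := by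
    rw [gramDet_snoc_eq v u q
      (fun i => huq _ (Submodule.subset_span (Set.mem_range_self i))) (huq q hqW),
      gramDet_snoc_mem v hqW, zero_add]
  have hnu : ‖u‖ ^ 2 = ‖P‖ ^ 2 + ‖u - P‖ ^ 2 := by
    have ho : ⟪P, u - P⟫ = 0 := by
      rw [real_inner_comm]; exact hu_perp P hPV
    have h := norm_add_sq_real P (u - P)
    rw [ho] at h
    have h2 : P + (u - P) = u := by abel
    rw [h2] at h; linarith
  have hnP : ‖P‖ ^ 2 = ‖q‖ ^ 2 + ‖P - q‖ ^ 2 := by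
    have ho : ⟪q, P - q⟫ = 0 := by
      rw [real_inner_comm]; exact hP_perp q hqW
    have h := norm_add_sq_real q (P - q)
    rw [ho] at h
    have h2 : q + (P - q) = P := by abel
    rw [h2] at h; linarith
  have hnuq : ‖u - q‖ ^ 2 = ‖u - P‖ ^ 2 + ‖P - q‖ ^ 2 := by
    have ho : ⟪u - P, P - q⟫ = 0 := hu_perp _ (V.sub_mem hPV (hWV hqW))
    have h := norm_add_sq_real (u - P) (P - q)
    rw [ho] at h
    have h2 : (u - P) + (P - q) = u - q := by abel
    rw [h2] at h; linarith
  unfold polarSin gramContent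
  rw [hAP, hAu]
  have hprod : ∀ x : H, (∏ j, ‖(Fin.snoc v x : Fin (d+1) → H) j‖) = (∏ i, ‖v i‖) * ‖x‖ := by
    intro x; rw [Fin.prod_univ_castSucc]; simp
  rw [hprod, hprod]
  set c := ∏ i, ‖v i‖ with hc
  have hc0 : 0 ≤ c := Finset.prod_nonneg fun i _ => norm_nonneg _
  rw [Real.sqrt_mul (sq_nonneg _) b, Real.sqrt_sq (norm_nonneg _),
    Real.sqrt_mul (sq_nonneg _) b, Real.sqrt_sq (norm_nonneg _)]
  set s := Real.sqrt b with hs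
  have hs0 : 0 ≤ s := Real.sqrt_nonneg b
  by_cases hzero : c * ‖P‖ = 0
  · rw [hzero, div_zero]
    exact div_nonneg (mul_nonneg (norm_nonneg _) hs0) (mul_nonneg hc0 (norm_nonneg _))
  · have hcP : 0 < c * ‖P‖ :=
      lt_of_le_of_ne (mul_nonneg hc0 (norm_nonneg _)) (Ne.symm hzero)
    have hcpos : 0 < c := by
      rcases hc0.lt_or_eq with h | h
      · exact h
      · exact absurd (by rw [← h, zero_mul]) hzero
    have hPpos : 0 < ‖P‖ := by
      rcases (norm_nonneg P).lt_or_eq with h | h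
      · exact h
      · exact absurd (by rw [← h, mul_zero]) hzero
    have hupos : 0 < ‖u‖ := by
      rcases (norm_nonneg u).lt_or_eq with h | h
      · exact h
      · exfalso; nlinarith
    rw [div_le_div_iff₀ (mul_pos hcpos hPpos) (mul_pos hcpos hupos)]
    have hkey2 : (‖P - q‖ * ‖u‖) ^ 2 ≤ (‖u - q‖ * ‖P‖) ^ 2 := by
      nlinarith [mul_nonneg (sq_nonneg ‖u - P‖) (sq_nonneg ‖q‖)]
    have hkey : ‖P - q‖ * ‖u‖ ≤ ‖u - q‖ * ‖P‖ := by
      have h := Real.sqrt_le_sqrt hkey2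
      rwa [Real.sqrt_sq (mul_nonneg (norm_nonneg _) (norm_nonneg _)),
        Real.sqrt_sq (mul_nonneg (norm_nonneg _) (norm_nonneg _))] at h
    nlinarith [mul_le_mul_of_nonneg_left hkey (mul_nonneg hs0 hc0)]
end

section
/- Let H be a real inner product space, V a (d+1)-dimensional subspace, v₁,…,v_{d+1} ∈ V, and u ∈ V^⊥ with u ≠ 0. Then for every i with 1 ≤ i ≤ d+1, |p_d sin₀(v₁,…,v_{d+1})| ≤ |p_d sin₀(v₁,…,v_{i−1},u,v_{i+1},…,v_{d+1})|, where p_d sin₀ denotes the polar sine (Gram content divided by product of norms, with value 0 when a vector is zero). -/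
open scoped RealInnerProductSpace

section Aux

variable {H : Type*} [NormedAddCommGroup H] [InnerProductSpace ℝ H]

private lemma gram_posSemidef {k : ℕ} (v : Fin k → H) :
    (Matrix.of fun i j => ⟪v i, v j⟫).PosSemidef := by
  refine Matrix.PosSemidef.of_dotProduct_mulVec_nonneg ?_ ?_
  · ext i j
    simp [Matrix.conjTranspose_apply, real_inner_comm]
  · intro x
    have h : dotProduct (star x) ((Matrix.of fun i j => ⟪v i, v j⟫).mulVec x)
        = ⟪∑ i, x i • v i, ∑ j, x j • v j⟫ := by
      rw [sum_inner]
      simp only [dotProduct, Matrix.mulVec, Matrix.of_apply, star_trivial,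
        real_inner_smul_left, inner_sum, real_inner_smul_right]
      refine Finset.sum_congr rfl fun i _ => ?_
      rw [Finset.mul_sum]
      exact Finset.sum_congr rfl fun j _ => by ring
    rw [h]
    exact real_inner_self_nonneg

private lemma gram_det_nonneg {k : ℕ} (v : Fin k → H) :
    0 ≤ (Matrix.of fun i j => ⟪v i, v j⟫).det := by
  exact (gram_posSemidef v).det_nonneg

/-- If the vector in slot `i` is orthogonal to all the others, the Gram determinant factors. -/
private lemma gram_det_update_orth {d : ℕ} (v : Fin (d + 1) → H) (i : Fin (d + 1))
    (w : H) (hw : ∀ j, j ≠ i → ⟪w, v j⟫ = 0) :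
    (Matrix.of fun a b => ⟪Function.update v i w a, Function.update v i w b⟫).det
      = ‖w‖ ^ 2 *
        (Matrix.of fun a b => ⟪v (i.succAbove a), v (i.succAbove b)⟫).det := by
  rw [Matrix.det_succ_row _ i, Finset.sum_eq_single i]
  · have h1 : ((-1 : ℝ)) ^ ((i : ℕ) + (i : ℕ)) = 1 := by
      rw [← two_mul, pow_mul]; norm_num
    have h2 : (Matrix.of fun a b => ⟪Function.update v i w a, Function.update v i w b⟫) i i
        = ‖w‖ ^ 2 := by
      simp [real_inner_self_eq_norm_sq]
    have h3 : ((Matrix.of fun a b =>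
          ⟪Function.update v i w a, Function.update v i w b⟫).submatrix
            i.succAbove i.succAbove)
        = Matrix.of fun a b => ⟪v (i.succAbove a), v (i.succAbove b)⟫ := by
      ext a b
      simp [Function.update_of_ne (Fin.succAbove_ne i a),
        Function.update_of_ne (Fin.succAbove_ne i b)]
    rw [h1, h2, h3, one_mul]
  · intro j _ hj
    have : (Matrix.of fun a b =>
        ⟪Function.update v i w a, Function.update v i w b⟫) i j = 0 := by
      simp only [Matrix.of_apply, Function.update_self,
        Function.update_of_ne hj]
      exact hw j hj
    rw [this]; ring
  · simp

/-- Adding an element of the span of the other vectors to slot `i` does not change the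
determinant of the coordinate matrix. -/
private lemma det_update_sub_span {d : ℕ} (φ : H →ₗ[ℝ] (Fin (d + 1) → ℝ))
    (v : Fin (d + 1) → H) (i : Fin (d + 1)) {p : H}
    (hp : p ∈ Submodule.span ℝ (Set.range fun j : Fin d => v (i.succAbove j))) :
    (Matrix.of fun j => φ (Function.update v i (v i - p) j)).det
      = (Matrix.of fun j => φ (v j)).det := by
  obtain ⟨g, hg⟩ := (Submodule.mem_span_range_iff_exists_fun ℝ).mp hp
  set M : Matrix (Fin (d + 1)) (Fin (d + 1)) ℝ :=
    Matrix.of fun j => φ (Function.update v i (v i - p) j) with hM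
  have hrow : ∀ j : Fin d, M (i.succAbove j) = φ (v (i.succAbove j)) := fun j =>
    congrArg φ (Function.update_of_ne (Fin.succAbove_ne i j) _ _)
  have hMi : M i = φ (v i) - φ p := by
    have h : M i = φ (v i - p) := congrArg φ (Function.update_self i (v i - p) v)
    rw [h, map_sub]
  have key : (Matrix.of fun j => φ (v j))
      = M.updateRow i (M i + ∑ j : Fin d, g j • φ (v (i.succAbove j))) := by
    have hφp : φ p = ∑ j : Fin d, g j • φ (v (i.succAbove j)) := by
      rw [← hg, map_sum]
      simp
    ext a b
    by_cases ha : a = i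
    · subst ha
      rw [Matrix.updateRow_self, hMi, ← hφp]
      simp
    · rw [Matrix.updateRow_ne ha]
      simp [hM, Function.update_of_ne ha]
  rw [key]
  have hdet : (M.updateRow i (M i + ∑ j : Fin d, g j • φ (v (i.succAbove j)))).det
      = M.det + (M.updateRow i (∑ j : Fin d, g j • φ (v (i.succAbove j)))).det := by
    rw [Matrix.det_updateRow_add, Matrix.updateRow_eq_self]
  rw [hdet]
  have hzero : (M.updateRow i (∑ j : Fin d, g j • φ (v (i.succAbove j)))).det = 0 := by
    have hsum : (M.updateRow i (∑ j : Fin d, g j • φ (v (i.succAbove j)))).det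
        = ∑ j : Fin d, ((M.updateRow i (g j • φ (v (i.succAbove j)))).det) := by
      unfold Matrix.det
      exact Matrix.detRowAlternating.toMultilinearMap.map_update_sum Finset.univ i
        (fun j => g j • φ (v (i.succAbove j))) M
    rw [hsum]
    refine Finset.sum_eq_zero fun j _ => ?_
    rw [Matrix.det_updateRow_smul]
    have : (M.updateRow i (φ (v (i.succAbove j)))).det = 0 := by
      refine Matrix.det_zero_of_row_eq (Fin.succAbove_ne i j).symm ?_
      rw [Matrix.updateRow_self, Matrix.updateRow_ne (Fin.succAbove_ne i j), hrow]
    rw [this]; simp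
  rw [hzero, add_zero]

/-- Gram determinant of vectors in a `(d+1)`-dimensional space is the square of the
coordinate determinant. -/
private lemma gram_det_eq_sq {d : ℕ} {V : Submodule ℝ H}
    (b : OrthonormalBasis (Fin (d + 1)) ℝ V) (v : Fin (d + 1) → H) (hv : ∀ i, v i ∈ V) :
    (Matrix.of fun a c => ⟪v a, v c⟫).det
      = ((Matrix.of fun a k => ⟪((b k : V) : H), v a⟫).det) ^ 2 := by
  have key : (Matrix.of fun a c => ⟪v a, v c⟫)
      = (Matrix.of fun a k => ⟪((b k : V) : H), v a⟫)
        * (Matrix.of fun a k => ⟪((b k : V) : H), v a⟫).transpose := by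
    ext a c
    rw [Matrix.mul_apply]
    have h := b.sum_inner_mul_inner (⟨v a, hv a⟩ : V) (⟨v c, hv c⟩ : V)
    simp only [Submodule.coe_inner] at h
    simp only [Matrix.of_apply, Matrix.transpose_apply]
    rw [← h]
    exact Finset.sum_congr rfl fun k _ => by rw [real_inner_comm]
  rw [key, Matrix.det_mul, Matrix.det_transpose, sq]

end Aux

theorem polarSin_orth_replacement {H : Type*} [NormedAddCommGroup H] [InnerProductSpace ℝ H]
    {d : ℕ} (V : Submodule ℝ H) [FiniteDimensional ℝ V]
    (hV : Module.finrank ℝ V = d + 1)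
    (v : Fin (d + 1) → H) (hv : ∀ i, v i ∈ V)
    (u : H) (hu : u ∈ Vᗮ) (hu0 : u ≠ 0) :
    ∀ i : Fin (d + 1), polarSin v ≤ polarSin (Function.update v i u) := by
  intro i
  classical
  -- orthonormal basis of V
  let b : OrthonormalBasis (Fin (d + 1)) ℝ V :=
    (stdOrthonormalBasis ℝ V).reindex (finCongr hV)
  -- span of the other vectors
  set S : Submodule ℝ H :=
    Submodule.span ℝ (Set.range fun j : Fin d => v (i.succAbove j)) with hSdef
  haveI : FiniteDimensional ℝ S := FiniteDimensional.span_of_finite ℝ (Set.finite_range _)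
  set p : H := ((S.orthogonalProjection (v i) : S) : H) with hpdef
  set q : H := v i - p with hqdef
  have hpS : p ∈ S := (S.orthogonalProjection (v i)).2
  have hqS : q ∈ Sᗮ := Submodule.sub_starProjection_mem_orthogonal (K := S) (v i)
  have hSV : S ≤ V := by
    rw [hSdef, Submodule.span_le]
    rintro x ⟨j, rfl⟩
    exact hv _
  have hq_orth : ∀ j, j ≠ i → ⟪q, v j⟫ = 0 := by
    intro j hj
    obtain ⟨k, rfl⟩ := Fin.exists_succAbove_eq hj
    have hmem : v (i.succAbove k) ∈ S := Submodule.subset_span ⟨k, rfl⟩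
    rw [real_inner_comm]
    exact (Submodule.mem_orthogonal S q).mp hqS _ hmem
  have hu_orth : ∀ j, j ≠ i → ⟪u, v j⟫ = 0 := by
    intro j _
    rw [real_inner_comm]
    exact (Submodule.mem_orthogonal V u).mp hu _ (hv j)
  -- the Gram determinant of the other vectors
  set D : ℝ := (Matrix.of fun a c => ⟪v (i.succAbove a), v (i.succAbove c)⟫).det with hDdef
  have hD0 : 0 ≤ D := gram_det_nonneg _
  -- coordinate linear map
  let φ : H →ₗ[ℝ] (Fin (d + 1) → ℝ) :=
    LinearMap.pi fun k => (innerSL ℝ ((b k : V) : H)).toLinearMap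
  have hφ : ∀ x k, φ x k = ⟪((b k : V) : H), x⟫ := fun _ _ => rfl
  -- Gram determinant identities
  have hq_mem : ∀ j, Function.update v i q j ∈ V := by
    intro j
    by_cases hj : j = i
    · rw [hj, Function.update_self]
      exact Submodule.sub_mem V (hv i) (hSV hpS)
    · rw [Function.update_of_ne hj]; exact hv j
  have hGv : (Matrix.of fun a c => ⟪v a, v c⟫).det
      = (Matrix.of fun a c => ⟪Function.update v i q a, Function.update v i q c⟫).det := by
    rw [gram_det_eq_sq b v hv, gram_det_eq_sq b _ hq_mem]
    congr 1
    have h1 : (Matrix.of fun a k => ⟪((b k : V) : H), Function.update v i q a⟫)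
        = Matrix.of fun j => φ (Function.update v i (v i - p) j) := by
      rw [← hqdef]
      ext a k
      exact (hφ _ _).symm
    have h2 : (Matrix.of fun a k => ⟪((b k : V) : H), v a⟫)
        = Matrix.of fun j => φ (v j) := by
      ext a k
      exact (hφ _ _).symm
    rw [h1, h2, det_update_sub_span φ v i hpS]
  have hGq : (Matrix.of fun a c =>
      ⟪Function.update v i q a, Function.update v i q c⟫).det = ‖q‖ ^ 2 * D :=
    gram_det_update_orth v i q hq_orth
  have hGu : (Matrix.of fun a c =>
      ⟪Function.update v i u a, Function.update v i u c⟫).det = ‖u‖ ^ 2 * D :=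
    gram_det_update_orth v i u hu_orth
  -- contents
  have hCv : gramContent v = ‖q‖ * Real.sqrt D := by
    rw [gramContent, hGv, hGq, Real.sqrt_mul (sq_nonneg _), Real.sqrt_sq (norm_nonneg _)]
  have hCu : gramContent (Function.update v i u) = ‖u‖ * Real.sqrt D := by
    rw [gramContent, hGu, Real.sqrt_mul (sq_nonneg _), Real.sqrt_sq (norm_nonneg _)]
  -- products of norms
  set P : ℝ := ∏ j : Fin d, ‖v (i.succAbove j)‖ with hPdef
  have hP0 : 0 ≤ P := Finset.prod_nonneg fun _ _ => norm_nonneg _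
  have hprodv : ∏ j, ‖v j‖ = ‖v i‖ * P := Fin.prod_univ_succAbove (fun j => ‖v j‖) i
  have hprodu : ∏ j, ‖Function.update v i u j‖ = ‖u‖ * P := by
    rw [Fin.prod_univ_succAbove (fun j => ‖Function.update v i u j‖) i]
    simp only [Function.update_self]
    congr 1
    exact Finset.prod_congr rfl fun j _ => by
      rw [Function.update_of_ne (Fin.succAbove_ne i j)]
  -- ‖q‖ ≤ ‖v i‖
  have hpq : ⟪p, q⟫ = 0 := (Submodule.mem_orthogonal S q).mp hqS _ hpS
  have hqle : ‖q‖ ≤ ‖v i‖ := by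
    have hvi : v i = p + q := by rw [hqdef]; abel
    have hsq : ‖v i‖ ^ 2 = ‖p‖ ^ 2 + ‖q‖ ^ 2 := by
      rw [hvi, norm_add_sq_real, hpq]; ring
    nlinarith [norm_nonneg q, norm_nonneg (v i), sq_nonneg ‖p‖]
  -- conclude
  rw [polarSin, polarSin, hCv, hCu, hprodv, hprodu,
    mul_div_mul_left _ _ (norm_ne_zero_iff.mpr hu0), mul_div_mul_comm]
  have h1 : ‖q‖ / ‖v i‖ ≤ 1 := div_le_one_of_le₀ hqle (norm_nonneg _)
  have h2 : 0 ≤ Real.sqrt D / P := div_nonneg (Real.sqrt_nonneg _) hP0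
  calc ‖q‖ / ‖v i‖ * (Real.sqrt D / P) ≤ 1 * (Real.sqrt D / P) :=
        mul_le_mul_of_nonneg_right h1 h2
    _ = Real.sqrt D / P := one_mul _
end

section
/- Let H be a real inner product space with dim H ≥ d+1, let v₁,…,v_{d+1} ∈ H and u ∈ H with u ≠ 0. Then |p_d sin₀(v₁,…,v_{d+1})| ≤ Σ_{i=1}^{d+1} |p_d sin₀(v₁,…,v_{i−1},u,v_{i+1},…,v_{d+1})|, i.e. the polar sine is a d-semimetric on H∖{0}. -/
open scoped RealInnerProductSpace

namespace PolarSinAux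

variable {H : Type*} [NormedAddCommGroup H] [InnerProductSpace ℝ H]

/-- The bi-Gram matrix of two families of vectors. -/
noncomputable def big {k : ℕ} (a b : Fin k → H) : Matrix (Fin k) (Fin k) ℝ :=
  Matrix.of fun i j => ⟪a i, b j⟫

/-- `f v i x y` : determinant of the bi-Gram matrix with slot `i` replaced by `x` resp. `y`. -/
noncomputable def f {k : ℕ} (v : Fin k → H) (i : Fin k) (x y : H) : ℝ :=
  (big (Function.update v i x) (Function.update v i y)).det

lemma big_update_left {k : ℕ} (v b : Fin k → H) (i : Fin k) (x : H) :
    big (Function.update v i x) b = (big v b).updateRow i fun l => ⟪x, b l⟫ := by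
  ext p q
  rcases eq_or_ne p i with rfl | hp
  · simp [big, Matrix.updateRow_self]
  · simp [big, Matrix.updateRow_ne hp, Function.update_of_ne hp]

lemma big_update_right {k : ℕ} (v a : Fin k → H) (i : Fin k) (y : H) :
    big a (Function.update v i y) = (big a v).updateCol i fun p => ⟪a p, y⟫ := by
  ext p q
  rcases eq_or_ne q i with rfl | hq
  · simp [big, Matrix.updateCol_self]
  · simp [big, Matrix.updateCol_ne hq, Function.update_of_ne hq]

lemma f_add_left {k : ℕ} (v : Fin k → H) (i : Fin k) (x x' y : H) :
    f v i (x + x') y = f v i x y + f v i x' y := by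
  simp only [f, big_update_left]
  have : (fun l => ⟪x + x', Function.update v i y l⟫)
      = (fun l => ⟪x, Function.update v i y l⟫) + fun l => ⟪x', Function.update v i y l⟫ := by
    funext l; exact inner_add_left _ _ _
  rw [this, Matrix.det_updateRow_add]

lemma f_smul_left {k : ℕ} (v : Fin k → H) (i : Fin k) (a : ℝ) (x y : H) :
    f v i (a • x) y = a * f v i x y := by
  simp only [f, big_update_left]
  have : (fun l => ⟪a • x, Function.update v i y l⟫)
      = a • fun l => ⟪x, Function.update v i y l⟫ := by
    funext l; exact real_inner_smul_left _ _ _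
  rw [this, Matrix.det_updateRow_smul]

lemma f_add_right {k : ℕ} (v : Fin k → H) (i : Fin k) (x y y' : H) :
    f v i x (y + y') = f v i x y + f v i x y' := by
  simp only [f, big_update_right]
  have : (fun p => ⟪Function.update v i x p, y + y'⟫)
      = (fun p => ⟪Function.update v i x p, y⟫) + fun p => ⟪Function.update v i x p, y'⟫ := by
    funext p; exact inner_add_right _ _ _
  rw [this, Matrix.det_updateCol_add]

lemma f_smul_right {k : ℕ} (v : Fin k → H) (i : Fin k) (a : ℝ) (x y : H) :
    f v i x (a • y) = a * f v i x y := by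
  simp only [f, big_update_right]
  have : (fun p => ⟪Function.update v i x p, a • y⟫)
      = a • fun p => ⟪Function.update v i x p, y⟫ := by
    funext p; exact real_inner_smul_right _ _ _
  rw [this, Matrix.det_updateCol_smul]

/-- `f` as a linear map in the first argument. -/
noncomputable def fL {k : ℕ} (v : Fin k → H) (i : Fin k) (y : H) : H →ₗ[ℝ] ℝ where
  toFun x := f v i x y
  map_add' x x' := f_add_left v i x x' y
  map_smul' a x := f_smul_left v i a x y

/-- `f` as a linear map in the second argument. -/
noncomputable def fR {k : ℕ} (v : Fin k → H) (i : Fin k) (x : H) : H →ₗ[ℝ] ℝ where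
  toFun y := f v i x y
  map_add' y y' := f_add_right v i x y y'
  map_smul' a y := f_smul_right v i a x y

end PolarSinAux

namespace PolarSinAux

variable {H : Type*} [NormedAddCommGroup H] [InnerProductSpace ℝ H]

lemma f_left_vj {k : ℕ} (v : Fin k → H) {i j : Fin k} (hj : j ≠ i) (y : H) :
    f v i (v j) y = 0 := by
  apply Matrix.det_zero_of_row_eq (Ne.symm hj)
  funext q
  simp [big, Function.update_of_ne hj]

lemma f_right_vj {k : ℕ} (v : Fin k → H) {i j : Fin k} (hj : j ≠ i) (x : H) :
    f v i x (v j) = 0 := by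
  apply Matrix.det_zero_of_column_eq (Ne.symm hj)
  intro p
  simp [big, Function.update_of_ne hj]

lemma f_orth_right {k : ℕ} (v : Fin k → H) {i j : Fin k} {w : H}
    (hw : ∀ l, l ≠ i → ⟪v l, w⟫ = 0) (hj : j ≠ i) :
    f v i w (v j) = 0 := by
  apply Matrix.det_eq_zero_of_row_eq_zero i
  intro q
  simp only [big, Matrix.of_apply, Function.update_self]
  rcases eq_or_ne q i with rfl | hq
  · rw [Function.update_self, real_inner_comm]; exact hw j hj
  · rw [Function.update_of_ne hq, real_inner_comm]; exact hw q hq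

lemma f_orth_left {k : ℕ} (v : Fin k → H) {i j : Fin k} {w : H}
    (hw : ∀ l, l ≠ i → ⟪v l, w⟫ = 0) (hj : j ≠ i) :
    f v i (v j) w = 0 := by
  apply Matrix.det_eq_zero_of_column_eq_zero i
  intro p
  simp only [big, Matrix.of_apply, Function.update_self]
  rcases eq_or_ne p i with rfl | hp
  · rw [Function.update_self]; exact hw j hj
  · rw [Function.update_of_ne hp]; exact hw p hp

lemma f_vi_w {k : ℕ} (v : Fin k → H) (i : Fin k) {w : H}
    (hw : ∀ l, ⟪v l, w⟫ = 0) :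
    f v i (v i) w = 0 := by
  apply Matrix.det_eq_zero_of_column_eq_zero i
  intro p
  simp only [big, Matrix.of_apply, Function.update_self]
  rw [Function.update_eq_self]
  exact hw p

lemma f_w_vi {k : ℕ} (v : Fin k → H) (i : Fin k) {w : H}
    (hw : ∀ l, ⟪v l, w⟫ = 0) :
    f v i w (v i) = 0 := by
  apply Matrix.det_eq_zero_of_row_eq_zero i
  intro q
  simp only [big, Matrix.of_apply, Function.update_self]
  rw [Function.update_eq_self, real_inner_comm]
  exact hw q

lemma f_w_w {k : ℕ} (v : Fin (k + 1) → H) (i : Fin (k + 1)) {w : H}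
    (hw : ∀ l, l ≠ i → ⟪v l, w⟫ = 0) :
    f v i w w = ‖w‖ ^ 2 * (big (v ∘ i.succAbove) (v ∘ i.succAbove)).det := by
  have hrow : ∀ q, q ≠ i →
      (big (Function.update v i w) (Function.update v i w)) i q = 0 := by
    intro q hq
    simp only [big, Matrix.of_apply, Function.update_self]
    rw [Function.update_of_ne hq, real_inner_comm]
    exact hw q hq
  rw [f, Matrix.det_succ_row _ i, Finset.sum_eq_single i]
  · have hii : (big (Function.update v i w) (Function.update v i w)) i i = ‖w‖ ^ 2 := by
      simp only [big, Matrix.of_apply, Function.update_self]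
      exact real_inner_self_eq_norm_sq w
    rw [hii]
    have hpow : (-1 : ℝ) ^ ((i : ℕ) + (i : ℕ)) = 1 :=
      Even.neg_one_pow ⟨(i : ℕ), rfl⟩
    rw [hpow, one_mul]
    have hsub : (big (Function.update v i w) (Function.update v i w)).submatrix
        i.succAbove i.succAbove = big (v ∘ i.succAbove) (v ∘ i.succAbove) := by
      ext p q
      simp only [Matrix.submatrix_apply, big, Matrix.of_apply, Function.comp_apply,
        Function.update_of_ne (Fin.succAbove_ne i p), Function.update_of_ne (Fin.succAbove_ne i q)]
    rw [hsub]
  · intro q _ hq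
    rw [hrow q hq, mul_zero, zero_mul]
  · intro h; exact absurd (Finset.mem_univ i) h

end PolarSinAux

namespace PolarSinAux

variable {H : Type*} [NormedAddCommGroup H] [InnerProductSpace ℝ H]

lemma f_sum_left {k : ℕ} (v : Fin k → H) (i : Fin k) (c : Fin k → ℝ) (y : H) :
    f v i (∑ j, c j • v j) y = c i * f v i (v i) y := by
  have h : f v i (∑ j, c j • v j) y = ∑ j, c j * f v i (v j) y := by
    have h0 := map_sum (fL v i y) (fun j => c j • v j) Finset.univ
    simp only [map_smul, smul_eq_mul] at h0
    exact h0
  rw [h, Finset.sum_eq_single i]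
  · intro j _ hj
    rw [f_left_vj v hj, mul_zero]
  · intro hi; exact absurd (Finset.mem_univ i) hi

lemma f_sum_right {k : ℕ} (v : Fin k → H) (i : Fin k) (c : Fin k → ℝ) (x : H) :
    f v i x (∑ j, c j • v j) = c i * f v i x (v i) := by
  have h : f v i x (∑ j, c j • v j) = ∑ j, c j * f v i x (v j) := by
    have h0 := map_sum (fR v i x) (fun j => c j • v j) Finset.univ
    simp only [map_smul, smul_eq_mul] at h0
    exact h0
  rw [h, Finset.sum_eq_single i]
  · intro j _ hj
    rw [f_right_vj v hj, mul_zero]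
  · intro hi; exact absurd (Finset.mem_univ i) hi

/-- Master expansion of the Gram determinant after replacing slot `i` by
`∑ c j • v j + w` with `w` orthogonal to the other vectors. -/
lemma f_self_expansion {k : ℕ} (v : Fin (k + 1) → H) (i : Fin (k + 1))
    (c : Fin (k + 1) → ℝ) (w : H)
    (hw : ∀ j, j ≠ i → ⟪v j, w⟫ = 0)
    (hc : c i = 0 ∨ ∀ j, ⟪v j, w⟫ = 0) :
    f v i ((∑ j, c j • v j) + w) ((∑ j, c j • v j) + w)
      = c i ^ 2 * (big v v).det
        + ‖w‖ ^ 2 * (big (v ∘ i.succAbove) (v ∘ i.succAbove)).det := by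
  set X := (∑ j, c j • v j) + w with hX
  have e1 : f v i X X = c i * f v i (v i) X + f v i w X := by
    rw [hX, f_add_left, f_sum_left]
  have e2 : f v i (v i) X = c i * f v i (v i) (v i) + f v i (v i) w := by
    rw [hX, f_add_right, f_sum_right]
  have e3 : f v i w X = c i * f v i w (v i) + f v i w w := by
    rw [hX, f_add_right, f_sum_right]
  have hvivi : f v i (v i) (v i) = (big v v).det := by
    unfold f
    rw [Function.update_eq_self]
  have hww := f_w_w v i hw
  have hcross : c i * f v i (v i) w = 0 ∧ c i * f v i w (v i) = 0 := by
    rcases hc with hc | hc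
    · rw [hc, zero_mul, zero_mul]; exact ⟨rfl, rfl⟩
    · rw [f_vi_w v i hc, f_w_vi v i hc]; simp
  rw [e1, e2, e3, hvivi, hww]
  linear_combination hcross.1 + hcross.2

end PolarSinAux

namespace PolarSinAux

variable {H : Type*} [NormedAddCommGroup H] [InnerProductSpace ℝ H]

lemma big_self_posSemidef {k : ℕ} (v : Fin k → H) : (big v v).PosSemidef := by
  refine Matrix.PosSemidef.of_dotProduct_mulVec_nonneg ?_ ?_
  · ext p q
    simp only [Matrix.conjTranspose_apply, big, Matrix.of_apply, starRingEnd_apply, star_trivial]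
    exact real_inner_comm _ _
  · intro x
    have h : dotProduct (star x) (Matrix.mulVec (big v v) x)
        = ⟪∑ p, x p • v p, ∑ q, x q • v q⟫ := by
      simp only [star_trivial, dotProduct, Matrix.mulVec, big, Matrix.of_apply,
        sum_inner, inner_sum, real_inner_smul_left, real_inner_smul_right]
      congr 1
      funext p
      rw [Finset.mul_sum]
      congr 1
      funext q
      rw [real_inner_comm]
      ring
    rw [h]
    exact real_inner_self_nonneg

lemma det_big_self_nonneg {k : ℕ} (v : Fin k → H) : 0 ≤ (big v v).det := by
  have h := big_self_posSemidef v
  rw [h.1.det_eq_prod_eigenvalues]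
  apply Finset.prod_nonneg
  intro t _
  simpa using h.eigenvalues_nonneg t

end PolarSinAux

namespace PolarSinAux

variable {H : Type*} [NormedAddCommGroup H] [InnerProductSpace ℝ H]

/-- "Base times height": the Gram determinant is at most `‖v i‖²` times the Gram
determinant of the other vectors. -/
lemma det_big_le {k : ℕ} (v : Fin (k + 1) → H) (i : Fin (k + 1)) :
    (big v v).det ≤ ‖v i‖ ^ 2 * (big (v ∘ i.succAbove) (v ∘ i.succAbove)).det := by
  set K : Submodule ℝ H := Submodule.span ℝ (Set.range (v ∘ i.succAbove)) with hK
  haveI : FiniteDimensional ℝ K := FiniteDimensional.span_of_finite ℝ (Set.finite_range _)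
  set p : H := (K.orthogonalProjectionOnto (v i) : H) with hp
  set q : H := v i - p with hq
  have hqK : q ∈ Kᗮ := by rw [hq, hp, ← Submodule.starProjection_apply]; exact K.sub_starProjection_mem_orthogonal (v i)
  have hmem : ∀ j, j ≠ i → v j ∈ K := by
    intro j hj
    rcases Fin.exists_succAbove_eq hj with ⟨t, rfl⟩
    exact Submodule.subset_span ⟨t, rfl⟩
  have hw : ∀ j, j ≠ i → ⟪v j, q⟫ = 0 := fun j hj =>
    (Submodule.mem_orthogonal K q).1 hqK _ (hmem j hj)
  obtain ⟨c', hc'⟩ := (Submodule.mem_span_range_iff_exists_fun ℝ).1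
    (by exact (K.orthogonalProjectionOnto (v i)).2 : p ∈ K)
  set c : Fin (k + 1) → ℝ := fun j => ∑ t, if j = i.succAbove t then c' t else 0 with hcdef
  have hci : c i = 0 := by
    apply Finset.sum_eq_zero
    intro t _
    rw [if_neg]
    exact fun h => (Fin.succAbove_ne i t) h.symm
  have hsum : (∑ j, c j • v j) = p := by
    rw [← hc']
    simp only [hcdef, Finset.sum_smul, ite_smul, zero_smul]
    rw [Finset.sum_comm]
    congr 1
    funext t
    rw [Finset.sum_eq_single (i.succAbove t)]
    · simp
    · intro j _ hj; rw [if_neg hj]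
    · intro h; exact absurd (Finset.mem_univ _) h
  have hvi : v i = (∑ j, c j • v j) + q := by rw [hsum, hq]; abel
  have hexp := f_self_expansion v i c q hw (Or.inl hci)
  have hfvi : f v i (v i) (v i) = (big v v).det := by
    unfold f; rw [Function.update_eq_self]
  rw [← hvi, hfvi, hci] at hexp
  have hqle : ‖q‖ ^ 2 ≤ ‖v i‖ ^ 2 := by
    have hpq : ⟪p, q⟫ = 0 := (Submodule.mem_orthogonal K q).1 hqK _ ((K.orthogonalProjectionOnto (v i)).2)
    have : ‖v i‖ ^ 2 = ‖p‖ ^ 2 + ‖q‖ ^ 2 := by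
      have hv : v i = p + q := by rw [hq]; abel
      rw [hv, norm_add_sq_real, hpq]
      ring
    nlinarith [sq_nonneg ‖p‖]
  calc (big v v).det = 0 ^ 2 * (big v v).det
        + ‖q‖ ^ 2 * (big (v ∘ i.succAbove) (v ∘ i.succAbove)).det := hexp
    _ = ‖q‖ ^ 2 * (big (v ∘ i.succAbove) (v ∘ i.succAbove)).det := by ring
    _ ≤ ‖v i‖ ^ 2 * (big (v ∘ i.succAbove) (v ∘ i.succAbove)).det :=
        mul_le_mul_of_nonneg_right hqle (det_big_self_nonneg _)

end PolarSinAux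

namespace PolarSinAux

variable {H : Type*} [NormedAddCommGroup H] [InnerProductSpace ℝ H]

lemma scalar_aux (s w c : ℝ) (hs : 0 ≤ s) :
    s * |c| + w ^ 2 ≤ Real.sqrt (s ^ 2 + w ^ 2) * Real.sqrt (c ^ 2 + w ^ 2) := by
  rw [← Real.sqrt_mul (by positivity)]
  have h2 : (s * |c| + w ^ 2) ^ 2 ≤ (s ^ 2 + w ^ 2) * (c ^ 2 + w ^ 2) := by
    nlinarith [mul_nonneg (sq_nonneg (s - |c|)) (sq_nonneg w), sq_abs c]
  calc s * |c| + w ^ 2 = Real.sqrt ((s * |c| + w ^ 2) ^ 2) :=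
        (Real.sqrt_sq (by positivity)).symm
    _ ≤ _ := Real.sqrt_le_sqrt h2

lemma polarSin_nonneg {k : ℕ} (v : Fin k → H) : 0 ≤ polarSin v :=
  div_nonneg (Real.sqrt_nonneg _) (Finset.prod_nonneg fun j _ => norm_nonneg _)

/-- The key inequality for unit vectors. -/
lemma key {k : ℕ} (v : Fin (k + 1) → H) (u : H) (hv : ∀ j, ‖v j‖ = 1)
    (hu : ‖u‖ = 1) : polarSin v ≤ ∑ i, polarSin (Function.update v i u) := by
  classical
  set K : Submodule ℝ H := Submodule.span ℝ (Set.range v) with hK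
  haveI : FiniteDimensional ℝ K := FiniteDimensional.span_of_finite ℝ (Set.finite_range _)
  set p : H := (K.orthogonalProjectionOnto u : H) with hp
  set w : H := u - p with hwdef
  have hwK : w ∈ Kᗮ := by rw [hwdef, hp, ← Submodule.starProjection_apply]; exact K.sub_starProjection_mem_orthogonal u
  have hw : ∀ j, ⟪v j, w⟫ = 0 := fun j =>
    (Submodule.mem_orthogonal K w).1 hwK _ (Submodule.subset_span ⟨j, rfl⟩)
  obtain ⟨c, hc⟩ := (Submodule.mem_span_range_iff_exists_fun ℝ).1
    (by exact (K.orthogonalProjectionOnto u).2 : p ∈ K)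
  have hu' : u = (∑ j, c j • v j) + w := by rw [hc, hwdef]; abel
  set D : ℝ := (big v v).det with hD
  have hD0 : 0 ≤ D := det_big_self_nonneg v
  -- expansion of each replaced Gram determinant
  have hDe : ∀ i, (big (Function.update v i u) (Function.update v i u)).det
      = c i ^ 2 * D + ‖w‖ ^ 2 * (big (v ∘ i.succAbove) (v ∘ i.succAbove)).det := by
    intro i
    have := f_self_expansion v i c w (fun j _ => hw j) (Or.inr hw)
    rw [← hu'] at this
    exact this
  have hDle : ∀ i : Fin (k + 1), D ≤ (big (v ∘ i.succAbove) (v ∘ i.succAbove)).det := by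
    intro i
    have := det_big_le v i
    rwa [hv i, one_pow, one_mul] at this
  -- rewrite polar sines
  have hps : polarSin v = Real.sqrt D := by
    have : (∏ j, ‖v j‖) = 1 := Finset.prod_eq_one fun j _ => hv j
    rw [polarSin, this, div_one]; rfl
  have hps' : ∀ i, polarSin (Function.update v i u)
      = Real.sqrt ((big (Function.update v i u) (Function.update v i u)).det) := by
    intro i
    have : (∏ j, ‖Function.update v i u j‖) = 1 := by
      apply Finset.prod_eq_one
      intro j _
      rcases eq_or_ne j i with rfl | hj
      · rw [Function.update_self]; exact hu
      · rw [Function.update_of_ne hj]; exact hv j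
    rw [polarSin, this, div_one]; rfl
  -- scalar setup
  set s : ℝ := ∑ i, |c i| with hs
  have hs0 : 0 ≤ s := Finset.sum_nonneg fun i _ => abs_nonneg _
  have hpnorm : ‖p‖ ≤ s := by
    rw [← hc]
    calc ‖∑ j, c j • v j‖ ≤ ∑ j, ‖c j • v j‖ := norm_sum_le _ _
      _ = s := by
        apply Finset.sum_congr rfl
        intro j _
        rw [norm_smul, hv j, mul_one]; rfl
  have hpw : ⟪p, w⟫ = 0 :=
    (Submodule.mem_orthogonal K w).1 hwK _ (K.orthogonalProjectionOnto u).2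
  have hone : ‖p‖ ^ 2 + ‖w‖ ^ 2 = 1 := by
    have hupw : u = p + w := by rw [hwdef]; abel
    have := norm_add_sq_real p w
    rw [← hupw, hpw, hu] at this
    nlinarith [this]
  set t : ℝ := Real.sqrt (s ^ 2 + ‖w‖ ^ 2) with ht
  have ht2 : t ^ 2 = s ^ 2 + ‖w‖ ^ 2 := Real.sq_sqrt (by positivity)
  have ht1 : 1 ≤ t := by
    have : (1 : ℝ) = Real.sqrt (‖p‖ ^ 2 + ‖w‖ ^ 2) := by rw [hone, Real.sqrt_one]
    rw [this, ht]
    apply Real.sqrt_le_sqrt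
    nlinarith [norm_nonneg p, hpnorm]
  have ht0 : 0 < t := lt_of_lt_of_le one_pos ht1
  -- per-index scalar bound
  have hper : ∀ i, s * |c i| + ‖w‖ ^ 2 ≤ t * Real.sqrt (c i ^ 2 + ‖w‖ ^ 2) := fun i =>
    scalar_aux s ‖w‖ (c i) hs0
  -- summing the scalar bound
  have hS1 : 1 ≤ ∑ i, Real.sqrt (c i ^ 2 + ‖w‖ ^ 2) := by
    set S : ℝ := ∑ i, Real.sqrt (c i ^ 2 + ‖w‖ ^ 2) with hSdef
    have hsum : ∑ i : Fin (k + 1), (s * |c i| + ‖w‖ ^ 2)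
        = s ^ 2 + (k + 1) * ‖w‖ ^ 2 := by
      rw [Finset.sum_add_distrib, ← Finset.mul_sum, ← hs, Finset.sum_const,
        Finset.card_univ, Fintype.card_fin]
      push_cast
      ring
    have hts : t ^ 2 ≤ t * S := by
      calc t ^ 2 = s ^ 2 + ‖w‖ ^ 2 := ht2
        _ ≤ s ^ 2 + (k + 1) * ‖w‖ ^ 2 := by nlinarith [sq_nonneg ‖w‖, Nat.cast_nonneg (α := ℝ) k]
        _ = ∑ i : Fin (k + 1), (s * |c i| + ‖w‖ ^ 2) := hsum.symm
        _ ≤ ∑ i, t * Real.sqrt (c i ^ 2 + ‖w‖ ^ 2) :=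
            Finset.sum_le_sum fun i _ => hper i
        _ = t * S := by rw [← Finset.mul_sum]
    have : t ≤ S := by
      rw [pow_two] at hts
      exact (mul_le_mul_iff_right₀ ht0).1 hts
    linarith
  -- combine everything
  rw [hps]
  have hterm : ∀ i, Real.sqrt (c i ^ 2 + ‖w‖ ^ 2) * Real.sqrt D
      ≤ polarSin (Function.update v i u) := by
    intro i
    rw [hps' i, hDe i]
    rw [← Real.sqrt_mul (by positivity)]
    apply Real.sqrt_le_sqrt
    have hexpand : (c i ^ 2 + ‖w‖ ^ 2) * D = c i ^ 2 * D + ‖w‖ ^ 2 * D := by ring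
    rw [hexpand]
    have h := mul_le_mul_of_nonneg_left (hDle i) (sq_nonneg ‖w‖)
    linarith
  calc Real.sqrt D = 1 * Real.sqrt D := (one_mul _).symm
    _ ≤ (∑ i, Real.sqrt (c i ^ 2 + ‖w‖ ^ 2)) * Real.sqrt D :=
        mul_le_mul_of_nonneg_right hS1 (Real.sqrt_nonneg _)
    _ = ∑ i, Real.sqrt (c i ^ 2 + ‖w‖ ^ 2) * Real.sqrt D := Finset.sum_mul _ _ _
    _ ≤ ∑ i, polarSin (Function.update v i u) := Finset.sum_le_sum fun i _ => hterm i

end PolarSinAux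

namespace PolarSinAux

variable {H : Type*} [NormedAddCommGroup H] [InnerProductSpace ℝ H]

lemma polarSin_smul {k : ℕ} (v : Fin k → H) (t : Fin k → ℝ) (ht : ∀ j, 0 < t j) :
    polarSin (fun j => t j • v j) = polarSin v := by
  have hprod : 0 < ∏ j, t j := Finset.prod_pos fun j _ => ht j
  have hmat : (Matrix.of fun p q => (⟪t p • v p, t q • v q⟫ : ℝ))
      = Matrix.diagonal t * (big v v) * Matrix.diagonal t := by
    ext p q
    rw [Matrix.mul_diagonal, Matrix.diagonal_mul]
    simp only [Matrix.of_apply, big, real_inner_smul_left, real_inner_smul_right]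
    ring
  have hdet : (Matrix.of fun p q => (⟪t p • v p, t q • v q⟫ : ℝ)).det
      = (∏ j, t j) ^ 2 * (big v v).det := by
    rw [hmat, Matrix.det_mul, Matrix.det_mul, Matrix.det_diagonal]
    ring
  have hgc : gramContent (fun j => t j • v j) = (∏ j, t j) * gramContent v := by
    show Real.sqrt _ = _ * Real.sqrt _
    rw [hdet, Real.sqrt_mul (sq_nonneg _), Real.sqrt_sq hprod.le]
    rfl
  have hden : (∏ j, ‖t j • v j‖) = (∏ j, t j) * ∏ j, ‖v j‖ := by
    rw [← Finset.prod_mul_distrib]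
    apply Finset.prod_congr rfl
    intro j _
    rw [norm_smul, Real.norm_eq_abs, abs_of_pos (ht j)]
  rw [polarSin, polarSin, hgc, hden, mul_div_mul_left _ _ hprod.ne']

lemma det_of_eq_big {k : ℕ} (v : Fin k → H) :
    (Matrix.of fun p q => (⟪v p, v q⟫ : ℝ)) = big v v := rfl

theorem polarSin_simplex_inequality' {d : ℕ}
    (v : Fin (d + 1) → H) (u : H) (hu : u ≠ 0) :
    polarSin v ≤ ∑ i, polarSin (Function.update v i u) := by
  classical
  by_cases hz : ∀ j, v j ≠ 0
  · set v' : Fin (d + 1) → H := fun j => ‖v j‖⁻¹ • v j with hv'def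
    set u' : H := ‖u‖⁻¹ • u with hu'def
    have hv' : ∀ j, ‖v' j‖ = 1 := fun j => norm_smul_inv_norm (hz j)
    have hu' : ‖u'‖ = 1 := norm_smul_inv_norm hu
    have h1 : polarSin v = polarSin v' :=
      (polarSin_smul v (fun j => ‖v j‖⁻¹) fun j => inv_pos.2 (norm_pos_iff.2 (hz j))).symm
    have h2 : ∀ i, polarSin (Function.update v i u) = polarSin (Function.update v' i u') := by
      intro i
      have hpos : ∀ j, 0 < (if j = i then ‖u‖⁻¹ else ‖v j‖⁻¹) := by
        intro j
        split
        · exact inv_pos.2 (norm_pos_iff.2 hu)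
        · exact inv_pos.2 (norm_pos_iff.2 (hz j))
      have := polarSin_smul (Function.update v i u)
        (fun j => if j = i then ‖u‖⁻¹ else ‖v j‖⁻¹) hpos
      rw [← this]
      congr 1
      funext j
      rcases eq_or_ne j i with rfl | hj
      · simp [Function.update_self, hu'def]
      · simp [Function.update_of_ne hj, hj, hv'def]
    calc polarSin v = polarSin v' := h1
      _ ≤ ∑ i, polarSin (Function.update v' i u') := key v' u' hv' hu'
      _ = ∑ i, polarSin (Function.update v i u) :=
          Finset.sum_congr rfl fun i _ => (h2 i).symm
  · push_neg at hz
    obtain ⟨j, hj⟩ := hz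
    have hdet : (Matrix.of fun p q => (⟪v p, v q⟫ : ℝ)).det = 0 := by
      apply Matrix.det_eq_zero_of_row_eq_zero j
      intro q
      simp [hj]
    have h0 : polarSin v = 0 := by
      rw [polarSin, gramContent, hdet, Real.sqrt_zero, zero_div]
    rw [h0]
    exact Finset.sum_nonneg fun i _ => polarSin_nonneg _

end PolarSinAux

theorem polarSin_simplex_inequality {H : Type*} [NormedAddCommGroup H]
    [InnerProductSpace ℝ H] {d : ℕ}
    (hdim : (d + 1 : Cardinal) ≤ Module.rank ℝ H)
    (v : Fin (d + 1) → H) (u : H) (hu : u ≠ 0) :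
    polarSin v ≤ ∑ i, polarSin (Function.update v i u) :=
  PolarSinAux.polarSin_simplex_inequality' v u hu
end

section
/- Let 0 ≤ s ≤ 1, k ≥ 3, V a k-dimensional real inner product space, and V₁, V₂ two distinct (k−1)-dimensional subspaces of V. Let v₁ ∈ V₁∖V₂ and v₂ ∈ V₂∖V₁. Denote by θ(u,W) = arcsin(dist(u,W)/‖u‖) the elevation angle of a nonzero vector u with respect to a subspace W, and Θ = max{θ(v₁, V₁∩V₂), θ(v₂, V₁∩V₂)}. Then Cone((2s/(√5·π))·θ(v₁,V₂), V₂, 0) ∩ Cone((2s/(√5·π))·θ(v₂,V₁), V₁, 0) ⊆ Cone(s·Θ, V₁∩V₂, 0), where Cone(θ, W, 0) = {u : dist(u,W) ≤ ‖u‖·sin(θ)}. -/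
open Metric

/-- The elevation angle of `u` with respect to a subspace `W`. -/
noncomputable def elevAngle {V : Type*} [NormedAddCommGroup V] [InnerProductSpace ℝ V]
    (u : V) (W : Submodule ℝ V) : ℝ :=
  Real.arcsin (Metric.infDist u (W : Set V) / ‖u‖)

/-- The cone around a subspace `W` centered at `0` with opening angle `θ`. -/
def cone {V : Type*} [NormedAddCommGroup V] [InnerProductSpace ℝ V]
    (θ : ℝ) (W : Submodule ℝ V) : Set V :=
  {u | Metric.infDist u (W : Set V) ≤ ‖u‖ * Real.sin θ}

section Aux
open Real
open scoped RealInnerProductSpace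

variable {V : Type*} [NormedAddCommGroup V] [InnerProductSpace ℝ V] [FiniteDimensional ℝ V]

lemma aux_concave {t x : ℝ} (ht0 : 0 ≤ t) (ht1 : t ≤ 1) (hx0 : 0 ≤ x) (hx : x ≤ π) :
    t * Real.sin x ≤ Real.sin (t * x) := by
  have h := strictConcaveOn_sin_Icc.concaveOn.2 (Set.mem_Icc.mpr ⟨le_rfl, pi_pos.le⟩)
    (Set.mem_Icc.mpr ⟨hx0, hx⟩) (sub_nonneg.2 ht1) ht0 (by ring)
  simpa using h

lemma infDist_submodule (W : Submodule ℝ V) (u : V) :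
    Metric.infDist u (W : Set V) = ‖u - W.orthogonalProjectionOnto u‖ := by
  rw [Metric.infDist_eq_iInf, ← W.starProjection_apply, Submodule.starProjection_minimal]
  simp_rw [dist_eq_norm]
  rfl

lemma exists_unit_normal (W : Submodule ℝ V) (h : Module.finrank ℝ Wᗮ = 1) :
    ∃ n : V, ‖n‖ = 1 ∧ Wᗮ = (ℝ ∙ n) := by
  obtain ⟨v, hv0, hv⟩ := finrank_eq_one_iff'.mp h
  have hv0' : (v : V) ≠ 0 := by simpa using hv0
  have hnv : ‖(v : V)‖ ≠ 0 := norm_ne_zero_iff.mpr hv0'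
  refine ⟨‖(v:V)‖⁻¹ • (v : V), ?_, ?_⟩
  · rw [norm_smul]; simp [norm_inv, inv_mul_cancel₀ hnv]
  · apply le_antisymm
    · intro w hw
      obtain ⟨c, hc⟩ := hv ⟨w, hw⟩
      have : c • (v : V) = w := congrArg Subtype.val hc
      rw [Submodule.mem_span_singleton]
      exact ⟨c * ‖(v:V)‖, by rw [← this, smul_smul]; congr 1; field_simp⟩
    · rw [Submodule.span_singleton_le_iff_mem]
      exact Submodule.smul_mem _ _ v.2

lemma dist_hyperplane (W : Submodule ℝ V) (n : V) (hn : ‖n‖ = 1) (hW : Wᗮ = (ℝ ∙ n))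
    (u : V) : Metric.infDist u (W : Set V) = |⟪u, n⟫| := by
  set Q := (W.orthogonalProjectionOnto u : V) with hQ
  have hmem : u - Q ∈ Wᗮ := W.sub_starProjection_mem_orthogonal u
  rw [hW, Submodule.mem_span_singleton] at hmem
  obtain ⟨x, hx⟩ := hmem
  have hn' : n ∈ Wᗮ := by rw [hW]; exact Submodule.mem_span_singleton_self n
  have hQn : ⟪Q, n⟫ = 0 := hn' Q (W.orthogonalProjectionOnto u).2
  have hun : ⟪u, n⟫ = x := by
    have : ⟪u - Q, n⟫ = x := by
      rw [← hx, real_inner_smul_left, real_inner_self_eq_norm_sq, hn]; ring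
    rw [inner_sub_left, hQn] at this; linarith
  rw [infDist_submodule, ← hQ, ← hx, norm_smul, hn, hun]; simp

lemma dist_inf_sq (W : Submodule ℝ V) (n₁ n₂ : V) (h1 : ‖n₁‖ = 1) (h2 : ‖n₂‖ = 1)
    (hW : Wᗮ = (ℝ ∙ n₁) ⊔ (ℝ ∙ n₂)) (u : V) :
    (1 - ⟪n₁, n₂⟫ ^ 2) * Metric.infDist u (W : Set V) ^ 2 =
      ⟪u, n₁⟫ ^ 2 + ⟪u, n₂⟫ ^ 2 - 2 * ⟪u, n₁⟫ * ⟪u, n₂⟫ * ⟪n₁, n₂⟫ := by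
  set Q := (W.orthogonalProjectionOnto u : V) with hQ
  have hmem : u - Q ∈ Wᗮ := W.sub_starProjection_mem_orthogonal u
  rw [hW, Submodule.mem_sup] at hmem
  obtain ⟨y₁, hy₁, y₂, hy₂, hy⟩ := hmem
  rw [Submodule.mem_span_singleton] at hy₁ hy₂
  obtain ⟨x, rfl⟩ := hy₁; obtain ⟨y, rfl⟩ := hy₂
  have hn₁ : n₁ ∈ Wᗮ := by
    rw [hW]; exact Submodule.mem_sup_left (Submodule.mem_span_singleton_self n₁)
  have hn₂ : n₂ ∈ Wᗮ := by
    rw [hW]; exact Submodule.mem_sup_right (Submodule.mem_span_singleton_self n₂)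
  have hQ1 : ⟪Q, n₁⟫ = 0 := hn₁ Q (W.orthogonalProjectionOnto u).2
  have hQ2 : ⟪Q, n₂⟫ = 0 := hn₂ Q (W.orthogonalProjectionOnto u).2
  have e1 : ⟪n₁, n₁⟫ = 1 := by rw [real_inner_self_eq_norm_sq, h1]; norm_num
  have e2 : ⟪n₂, n₂⟫ = 1 := by rw [real_inner_self_eq_norm_sq, h2]; norm_num
  have esym : ⟪n₂, n₁⟫ = ⟪n₁, n₂⟫ := real_inner_comm _ _
  have ha : ⟪u, n₁⟫ = x + y * ⟪n₁, n₂⟫ := by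
    have : ⟪u - Q, n₁⟫ = x + y * ⟪n₁, n₂⟫ := by
      rw [← hy, inner_add_left, real_inner_smul_left, real_inner_smul_left, e1, esym]; ring
    rw [inner_sub_left, hQ1] at this; linarith
  have hb : ⟪u, n₂⟫ = x * ⟪n₁, n₂⟫ + y := by
    have : ⟪u - Q, n₂⟫ = x * ⟪n₁, n₂⟫ + y := by
      rw [← hy, inner_add_left, real_inner_smul_left, real_inner_smul_left, e2]; ring
    rw [inner_sub_left, hQ2] at this; linarith
  have hnorm : Metric.infDist u (W : Set V) ^ 2 = x^2 + y^2 + 2*x*y*⟪n₁, n₂⟫ := by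
    rw [infDist_submodule, ← hQ, ← real_inner_self_eq_norm_sq, ← hy]
    rw [inner_add_left, inner_add_right, inner_add_right, real_inner_smul_left,
      real_inner_smul_left, real_inner_smul_left, real_inner_smul_left,
      real_inner_smul_right, real_inner_smul_right, real_inner_smul_right,
      real_inner_smul_right, e1, e2, esym]
    ring
  rw [hnorm, ha, hb]; ring

lemma infDist_le_norm (W : Submodule ℝ V) (u : V) :
    Metric.infDist u (W : Set V) ≤ ‖u‖ := by
  simpa [dist_zero_right] using Metric.infDist_le_dist_of_mem (x := u) (W.zero_mem)

lemma sin_elevAngle (S : Submodule ℝ V) (u : V) :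
    Real.sin (elevAngle u S) = Metric.infDist u (S : Set V) / ‖u‖ := by
  rcases eq_or_ne u 0 with rfl | hu
  · have h0 : Metric.infDist (0:V) (S : Set V) = 0 :=
      Metric.infDist_zero_of_mem (by exact_mod_cast S.zero_mem)
    simp [elevAngle, h0]
  · have hnu : 0 < ‖u‖ := norm_pos_iff.mpr hu
    rw [elevAngle, Real.sin_arcsin]
    · linarith [div_nonneg (Metric.infDist_nonneg (x := u) (s := (S:Set V))) hnu.le]
    · exact (div_le_one hnu).mpr (infDist_le_norm S u)

lemma elevAngle_nonneg (S : Submodule ℝ V) (u : V) : 0 ≤ elevAngle u S :=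
  Real.arcsin_nonneg.mpr
    (div_nonneg (Metric.infDist_nonneg (x := u) (s := (S:Set V))) (norm_nonneg u))

lemma elevAngle_le (S : Submodule ℝ V) (u : V) : elevAngle u S ≤ π / 2 :=
  Real.arcsin_le_pi_div_two _

end Aux


open Real
open scoped RealInnerProductSpace

set_option maxHeartbeats 2000000 in
theorem cone_intersection_subset {V : Type*} [NormedAddCommGroup V]
    [InnerProductSpace ℝ V] [FiniteDimensional ℝ V]
    {k : ℕ} (hk : 3 ≤ k) (hV : Module.finrank ℝ V = k)
    (V₁ V₂ : Submodule ℝ V) (hne : V₁ ≠ V₂)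
    (hV₁ : Module.finrank ℝ V₁ = k - 1) (hV₂ : Module.finrank ℝ V₂ = k - 1)
    (v₁ : V) (hv₁ : v₁ ∈ V₁) (hv₁' : v₁ ∉ V₂)
    (v₂ : V) (hv₂ : v₂ ∈ V₂) (hv₂' : v₂ ∉ V₁)
    (s : ℝ) (hs0 : 0 ≤ s) (hs1 : s ≤ 1) :
    cone ((2 * s / (Real.sqrt 5 * Real.pi)) * elevAngle v₁ V₂) V₂ ∩
        cone ((2 * s / (Real.sqrt 5 * Real.pi)) * elevAngle v₂ V₁) V₁ ⊆
      cone (s * max (elevAngle v₁ (V₁ ⊓ V₂)) (elevAngle v₂ (V₁ ⊓ V₂))) (V₁ ⊓ V₂) := by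
  have hπ : (0:ℝ) < π := pi_pos
  have h5 : (0:ℝ) < Real.sqrt 5 := Real.sqrt_pos.mpr (by norm_num)
  have h25 : (2:ℝ) ≤ Real.sqrt 5 := by
    nlinarith [Real.sq_sqrt (show (0:ℝ) ≤ 5 by norm_num), Real.sqrt_nonneg 5]
  -- unit normals
  have hr₁ : Module.finrank ℝ V₁ᗮ = 1 := by
    have := Submodule.finrank_add_finrank_orthogonal (K := V₁); omega
  have hr₂ : Module.finrank ℝ V₂ᗮ = 1 := by
    have := Submodule.finrank_add_finrank_orthogonal (K := V₂); omega
  obtain ⟨n₁, hn₁, hspan₁⟩ := exists_unit_normal V₁ hr₁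
  obtain ⟨n₂, hn₂, hspan₂⟩ := exists_unit_normal V₂ hr₂
  set W := V₁ ⊓ V₂ with hWdef
  have hWperp : Wᗮ = (ℝ ∙ n₁) ⊔ (ℝ ∙ n₂) := by
    have h1 : V₁ = (ℝ ∙ n₁)ᗮ := by rw [← hspan₁, Submodule.orthogonal_orthogonal]
    have h2 : V₂ = (ℝ ∙ n₂)ᗮ := by rw [← hspan₂, Submodule.orthogonal_orthogonal]
    rw [hWdef, h1, h2, Submodule.inf_orthogonal, Submodule.orthogonal_orthogonal]
  have hVeq : ∀ m : V, V₂ᗮ = (ℝ ∙ m) → (ℝ ∙ n₁ : Submodule ℝ V) = (ℝ ∙ m) → False := by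
    intro m hm hEq
    apply hne
    have h : V₁ᗮ = V₂ᗮ := by rw [hspan₁, hm, ← hEq]
    have h2 := congrArg (Submodule.orthogonal) h
    rwa [Submodule.orthogonal_orthogonal, Submodule.orthogonal_orthogonal] at h2
  set c : ℝ := ⟪n₁, n₂⟫ with hcdef
  have hclt : c < 1 := by
    refine (inner_lt_one_iff_real_of_norm_eq_one hn₁ hn₂).mpr fun h => hVeq n₂ hspan₂ ?_
    rw [h]
  have hcgt : -1 < c := by
    have hneg : ‖-n₂‖ = 1 := by rwa [norm_neg]
    have h := (inner_lt_one_iff_real_of_norm_eq_one hn₁ hneg).mpr fun h => hVeq (-n₂) ?_ ?_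
    · rw [inner_neg_right] at h; change -c < 1 at h; linarith
    · rw [hspan₂]
      ext w
      simp only [Submodule.mem_span_singleton]
      constructor
      · rintro ⟨a, rfl⟩; exact ⟨-a, by simp⟩
      · rintro ⟨a, rfl⟩; exact ⟨-a, by simp⟩
    · rw [h]
  have hc2 : 0 < 1 - c ^ 2 := by nlinarith
  set s2 : ℝ := Real.sqrt (1 - c ^ 2) with hs2def
  have hs2pos : 0 < s2 := Real.sqrt_pos.mpr hc2
  have hs2sq : s2 ^ 2 = 1 - c ^ 2 := Real.sq_sqrt hc2.le
  -- distances to hyperplanes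
  have hd₁ : ∀ u : V, Metric.infDist u (V₁ : Set V) = |⟪u, n₁⟫| :=
    dist_hyperplane V₁ n₁ hn₁ hspan₁
  have hd₂ : ∀ u : V, Metric.infDist u (V₂ : Set V) = |⟪u, n₂⟫| :=
    dist_hyperplane V₂ n₂ hn₂ hspan₂
  -- key single-zero identities
  have key₂ : ∀ u : V, ⟪u, n₂⟫ = 0 → s2 * Metric.infDist u (W : Set V) = |⟪u, n₁⟫| := by
    intro u h
    have hkey := dist_inf_sq W n₁ n₂ hn₁ hn₂ hWperp u
    rw [h] at hkey
    have hsq : (s2 * Metric.infDist u (W : Set V)) ^ 2 = ⟪u, n₁⟫ ^ 2 := by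
      rw [mul_pow, hs2sq]; linarith
    have h0 : 0 ≤ s2 * Metric.infDist u (W : Set V) :=
      mul_nonneg hs2pos.le Metric.infDist_nonneg
    calc s2 * Metric.infDist u (W : Set V)
        = Real.sqrt ((s2 * Metric.infDist u (W : Set V)) ^ 2) := (Real.sqrt_sq h0).symm
      _ = Real.sqrt (⟪u, n₁⟫ ^ 2) := by rw [hsq]
      _ = |⟪u, n₁⟫| := Real.sqrt_sq_eq_abs _
  have key₁ : ∀ u : V, ⟪u, n₁⟫ = 0 → s2 * Metric.infDist u (W : Set V) = |⟪u, n₂⟫| := by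
    intro u h
    have hkey := dist_inf_sq W n₁ n₂ hn₁ hn₂ hWperp u
    rw [h] at hkey
    have hsq : (s2 * Metric.infDist u (W : Set V)) ^ 2 = ⟪u, n₂⟫ ^ 2 := by
      rw [mul_pow, hs2sq]; linarith
    have h0 : 0 ≤ s2 * Metric.infDist u (W : Set V) :=
      mul_nonneg hs2pos.le Metric.infDist_nonneg
    calc s2 * Metric.infDist u (W : Set V)
        = Real.sqrt ((s2 * Metric.infDist u (W : Set V)) ^ 2) := (Real.sqrt_sq h0).symm
      _ = Real.sqrt (⟪u, n₂⟫ ^ 2) := by rw [hsq]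
      _ = |⟪u, n₂⟫| := Real.sqrt_sq_eq_abs _
  -- inner products of v₁, v₂ with their own normals vanish
  have hv₁n : ⟪v₁, n₁⟫ = 0 := by
    have hm : n₁ ∈ V₁ᗮ := by rw [hspan₁]; exact Submodule.mem_span_singleton_self n₁
    exact hm v₁ hv₁
  have hv₂n : ⟪v₂, n₂⟫ = 0 := by
    have hm : n₂ ∈ V₂ᗮ := by rw [hspan₂]; exact Submodule.mem_span_singleton_self n₂
    exact hm v₂ hv₂
  -- sines of eleation angles
  set e₁ := elevAngle v₁ W with he₁
  set e₂ := elevAngle v₂ W with he₂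
  set θ₁ := elevAngle v₁ V₂ with hθ₁
  set θ₂ := elevAngle v₂ V₁ with hθ₂
  set Θ := max e₁ e₂ with hΘ
  have hΘ0 : 0 ≤ Θ := le_trans (elevAngle_nonneg W v₁) (le_max_left _ _)
  have hΘ2 : Θ ≤ π / 2 := max_le (elevAngle_le W v₁) (elevAngle_le W v₂)
  have hsinΘ0 : 0 ≤ Real.sin Θ := Real.sin_nonneg_of_nonneg_of_le_pi hΘ0 (by linarith)
  have hsinθ₁ : Real.sin θ₁ = s2 * Real.sin e₁ := by
    rw [hθ₁, he₁, sin_elevAngle, sin_elevAngle, hd₂, ← key₁ v₁ hv₁n, mul_div_assoc]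
  have hsinθ₂ : Real.sin θ₂ = s2 * Real.sin e₂ := by
    rw [hθ₂, he₂, sin_elevAngle, sin_elevAngle, hd₁, ← key₂ v₂ hv₂n, mul_div_assoc]
  have hse₁ : Real.sin e₁ ≤ Real.sin Θ :=
    Real.sin_le_sin_of_le_of_le_pi_div_two
      (by linarith [elevAngle_nonneg W v₁]) hΘ2 (le_max_left _ _)
  have hse₂ : Real.sin e₂ ≤ Real.sin Θ :=
    Real.sin_le_sin_of_le_of_le_pi_div_two
      (by linarith [elevAngle_nonneg W v₂]) hΘ2 (le_max_right _ _)
  -- scalar bound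
  set c' : ℝ := 2 * s / (Real.sqrt 5 * π) with hc'def
  have hc'0 : 0 ≤ c' := by positivity
  have scalar : ∀ θ e : ℝ, 0 ≤ θ → θ ≤ π / 2 → Real.sin θ = s2 * Real.sin e →
      Real.sin e ≤ Real.sin Θ → Real.sin (c' * θ) ≤ c' * (π / 2) * (s2 * Real.sin Θ) := by
    intro θ e hθ0 hθpi hsin hse
    have hjordan := Real.mul_le_sin hθ0 hθpi
    have h2 : θ ≤ π / 2 * Real.sin θ := by
      rw [div_mul_eq_mul_div, div_le_iff₀ hπ] at hjordan
      nlinarith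
    calc Real.sin (c' * θ) ≤ c' * θ := Real.sin_le (by positivity)
      _ ≤ c' * (π / 2 * Real.sin θ) := by gcongr
      _ = c' * (π / 2) * (s2 * Real.sin e) := by rw [hsin]; ring
      _ ≤ c' * (π / 2) * (s2 * Real.sin Θ) := by gcongr <;> positivity
  -- main argument
  intro u hu
  obtain ⟨hu₂, hu₁⟩ := hu
  have hu₂' : Metric.infDist u (V₂ : Set V) ≤ ‖u‖ * Real.sin (c' * θ₁) := hu₂
  have hu₁' : Metric.infDist u (V₁ : Set V) ≤ ‖u‖ * Real.sin (c' * θ₂) := hu₁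
  show Metric.infDist u (W : Set V) ≤ ‖u‖ * Real.sin (s * Θ)
  set d := Metric.infDist u (W : Set V) with hd
  have hd0 : 0 ≤ d := Metric.infDist_nonneg
  set a := ⟪u, n₁⟫ with ha
  set b := ⟪u, n₂⟫ with hb
  -- s2 * d ≤ |a| + |b|
  have hsum : s2 * d ≤ |a| + |b| := by
    have hkey := dist_inf_sq W n₁ n₂ hn₁ hn₂ hWperp u
    have habs : |a * b * c| = |a| * |b| * |c| := by rw [abs_mul, abs_mul]
    have hcle : |c| ≤ 1 := by rw [abs_le]; constructor <;> linarith
    have habc : -(|a| * |b|) ≤ a * b * c := by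
      have h1 : -(|a| * |b| * |c|) ≤ a * b * c := habs ▸ neg_abs_le _
      have h2 : |a| * |b| * |c| ≤ |a| * |b| :=
        mul_le_of_le_one_right (by positivity) hcle
      linarith
    have hsq : (s2 * d) ^ 2 ≤ (|a| + |b|) ^ 2 := by
      have hexp : (|a| + |b|) ^ 2 = a ^ 2 + 2 * (|a| * |b|) + b ^ 2 := by
        rw [add_sq, sq_abs, sq_abs]; ring
      rw [mul_pow, hs2sq, hkey, hexp]
      linarith
    calc s2 * d = Real.sqrt ((s2 * d) ^ 2) :=
          (Real.sqrt_sq (mul_nonneg hs2pos.le hd0)).symm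
      _ ≤ Real.sqrt ((|a| + |b|) ^ 2) := Real.sqrt_le_sqrt hsq
      _ = |a| + |b| := Real.sqrt_sq (by positivity)
  have hA : |a| ≤ ‖u‖ * (c' * (π / 2) * (s2 * Real.sin Θ)) := by
    rw [ha, ← hd₁ u]
    refine le_trans hu₁' (mul_le_mul_of_nonneg_left ?_ (norm_nonneg u))
    exact scalar θ₂ e₂ (elevAngle_nonneg V₁ v₂) (elevAngle_le V₁ v₂) hsinθ₂ hse₂
  have hB : |b| ≤ ‖u‖ * (c' * (π / 2) * (s2 * Real.sin Θ)) := by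
    rw [hb, ← hd₂ u]
    refine le_trans hu₂' (mul_le_mul_of_nonneg_left ?_ (norm_nonneg u))
    exact scalar θ₁ e₁ (elevAngle_nonneg V₂ v₁) (elevAngle_le V₂ v₁) hsinθ₁ hse₁
  have hd_le : d ≤ ‖u‖ * (c' * π * Real.sin Θ) := by
    have h : s2 * d ≤ s2 * (‖u‖ * (c' * π * Real.sin Θ)) := by
      calc s2 * d ≤ |a| + |b| := hsum
        _ ≤ 2 * (‖u‖ * (c' * (π / 2) * (s2 * Real.sin Θ))) := by linarith
        _ = s2 * (‖u‖ * (c' * π * Real.sin Θ)) := by ring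
    exact le_of_mul_le_mul_left h hs2pos
  have hc'π : c' * π = 2 * s / Real.sqrt 5 := by
    rw [hc'def, div_mul_eq_mul_div, mul_comm (Real.sqrt 5) π, ← div_div,
      mul_div_cancel_right₀ _ (ne_of_gt hπ)]
  have hfinal : c' * π * Real.sin Θ ≤ Real.sin (s * Θ) := by
    rw [hc'π]
    have h1 : 2 * s / Real.sqrt 5 ≤ s := by
      rw [div_le_iff₀ h5]
      have h := mul_le_mul_of_nonneg_left h25 hs0
      linarith
    calc 2 * s / Real.sqrt 5 * Real.sin Θ ≤ s * Real.sin Θ :=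
          mul_le_mul_of_nonneg_right h1 hsinΘ0
      _ ≤ Real.sin (s * Θ) := aux_concave hs0 hs1 hΘ0 (by linarith)
  calc d ≤ ‖u‖ * (c' * π * Real.sin Θ) := hd_le
    _ ≤ ‖u‖ * Real.sin (s * Θ) := mul_le_mul_of_nonneg_left hfinal (norm_nonneg u)
end
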